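/- Auxiliary parameter-Lipschitz bounds for γ and z. Consider the ResNet with input ‖x‖₂ ≤ B and activation satisfying the stated regularity conditions, and define γ^{(ℓ)}(θ) = α·(σ_v·σ_w/√n)·diag{φ'(g^{(ℓ)})}·V^{(ℓ)ᵀ}·δ^{(ℓ)}(θ) and z^{(ℓ)}(θ) = α·σ_v·φ(g^{(ℓ)}), where δ^{(ℓ)}(θ) = ∇_{x^{(ℓ)}} f. There exists a constant K depending only on L, α, σ_v, σ_w, C_φ, B, and d (and not on n) such that for all parameter vectors θ, θ̃ both satisfying the spectral bounds, and every ℓ ∈ {1,…,L}: ‖γ^{(ℓ)}(θ) − γ^{(ℓ)}(θ̃)‖₂ ≤ K·‖θ − θ̃‖₂ and ‖z^{(ℓ)}(θ) − z^{(ℓ)}(θ̃)‖₂ ≤ K·‖θ − θ̃‖₂, where ‖θ − θ̃‖₂ is the Euclidean norm of the difference of the full (vectorized) parameter vectors. -/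

import Mathlib

open MeasureTheory ProbabilityTheory Filter

noncomputable section

/-- Index type for all ResNet parameters: w^{(L+1)}, {W^{(ℓ)}}, {V^{(ℓ)}}, U. -/
abbrev ParamIdx (n L d : ℕ) : Type :=
  (Fin n) ⊕ (Fin L × Fin n × Fin n) ⊕ (Fin L × Fin n × Fin n) ⊕ (Fin n × Fin d)

/-- The full (vectorized) parameter vector. -/
abbrev Params (n L d : ℕ) : Type := ParamIdx n L d → ℝ

/-- Last-layer weight vector w^{(L+1)}. -/
def wOut {n L d : ℕ} (θ : Params n L d) : Fin n → ℝ := fun i => θ (Sum.inl i)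

/-- W^{(ℓ)} for ℓ = 1,…,L (zero outside this range). -/
def Wmat {n L d : ℕ} (θ : Params n L d) (ℓ : ℕ) : Matrix (Fin n) (Fin n) ℝ :=
  if h : 1 ≤ ℓ ∧ ℓ ≤ L then
    Matrix.of fun i j => θ (Sum.inr (Sum.inl (⟨ℓ - 1, by omega⟩, i, j)))
  else 0

/-- V^{(ℓ)} for ℓ = 1,…,L (zero outside this range). -/
def Vmat {n L d : ℕ} (θ : Params n L d) (ℓ : ℕ) : Matrix (Fin n) (Fin n) ℝ :=
  if h : 1 ≤ ℓ ∧ ℓ ≤ L then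
    Matrix.of fun i j => θ (Sum.inr (Sum.inr (Sum.inl (⟨ℓ - 1, by omega⟩, i, j))))
  else 0

/-- Input lifting matrix U. -/
def Umat {n L d : ℕ} (θ : Params n L d) : Matrix (Fin n) (Fin d) ℝ :=
  Matrix.of fun i j => θ (Sum.inr (Sum.inr (Sum.inr (i, j))))

/-- Euclidean (ℓ²) norm of a finite vector. -/
def l2norm {k : ℕ} (v : Fin k → ℝ) : ℝ := Real.sqrt (∑ i, (v i) ^ 2)

/-- Euclidean norm of a full parameter vector. -/
def paramNorm {n L d : ℕ} (θ : Params n L d) : ℝ := Real.sqrt (∑ i, (θ i) ^ 2)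

/-- Spectral (operator) norm of a matrix. -/
def specNorm {m k : ℕ} (A : Matrix (Fin m) (Fin k) ℝ) : ℝ :=
  sSup ((fun v => l2norm (A.mulVec v)) '' {v | l2norm v ≤ 1})

/-- Smallest singular value of a matrix. -/
def singMin {m k : ℕ} (A : Matrix (Fin m) (Fin k) ℝ) : ℝ :=
  sInf ((fun v => l2norm (A.mulVec v)) '' {v | l2norm v = 1})

/-- Frobenius norm of a matrix. -/
def frobNorm {m k : ℕ} (A : Matrix (Fin m) (Fin k) ℝ) : ℝ :=
  Real.sqrt (∑ i, ∑ j, (A i j) ^ 2)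

/-- Layer activations x^{(ℓ)} of the ResNet. -/
def xvec {n L d : ℕ} (φ : ℝ → ℝ) (α σv σw : ℝ) (θ : Params n L d) (x : Fin d → ℝ) :
    ℕ → Fin n → ℝ
  | 0 => (Real.sqrt d)⁻¹ • (Umat θ).mulVec x
  | ℓ + 1 =>
      xvec φ α σv σw θ x ℓ +
        (α * σv / Real.sqrt n) • (Vmat θ (ℓ + 1)).mulVec
          (fun i => φ ((σw / Real.sqrt n) *
              (Wmat θ (ℓ + 1)).mulVec (xvec φ α σv σw θ x ℓ) i))

/-- Pre-activations g^{(ℓ)} of the ResNet (meaningful for ℓ = 1,…,L). -/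
def gvec {n L d : ℕ} (φ : ℝ → ℝ) (α σv σw : ℝ) (θ : Params n L d) (x : Fin d → ℝ)
    (ℓ : ℕ) : Fin n → ℝ :=
  (σw / Real.sqrt n) • (Wmat θ ℓ).mulVec (xvec φ α σv σw θ x (ℓ - 1))

/-- The ResNet output f(x;θ). -/
def fnet {n L d : ℕ} (φ : ℝ → ℝ) (α σv σw : ℝ) (θ : Params n L d) (x : Fin d → ℝ) : ℝ :=
  (σw / Real.sqrt n) * ∑ i, wOut θ i * xvec φ α σv σw θ x L i

/-- The i.i.d. standard Gaussian initialization measure on the parameters. -/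
def initMeasure (n L d : ℕ) : Measure (Params n L d) :=
  Measure.pi fun _ => gaussianReal 0 1

/-- Standard Gaussian on ℝ². -/
def stdGauss2 : Measure (ℝ × ℝ) := (gaussianReal 0 1).prod (gaussianReal 0 1)

/-- The centered bivariate Gaussian N(0,Σ) for Σ = [[K11,K12],[K12,K22]] positive
semidefinite, realized via the Cholesky factorization. -/
def biGauss (K11 K12 K22 : ℝ) : Measure (ℝ × ℝ) :=
  stdGauss2.map (fun z => (Real.sqrt K11 * z.1,
    (K12 / Real.sqrt K11) * z.1 + Real.sqrt (K22 - K12 ^ 2 / K11) * z.2))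

/-- T(Σ) = E_{(u,v)∼N(0,Σ)}[φ(u)φ(v)]. -/
def TT (φ : ℝ → ℝ) (K11 K12 K22 : ℝ) : ℝ :=
  ∫ uv, φ uv.1 * φ uv.2 ∂(biGauss K11 K12 K22)

/-- Ṫ(Σ) = E_{(u,v)∼N(0,Σ)}[φ'(u)φ'(v)]. -/
def TTdot (φ : ℝ → ℝ) (K11 K12 K22 : ℝ) : ℝ :=
  ∫ uv, deriv φ uv.1 * deriv φ uv.2 ∂(biGauss K11 K12 K22)

/-- The limiting GP kernels: `Kker … ℓ x y` is K^{(ℓ+1)}(x,y); in particular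
`Kker … 0 x y = K^{(1)}(x,y) = (σ_w²/d)·xᵀy` and `Kker … L x y = K^{(L+1)}(x,y)`. -/
def Kker (φ : ℝ → ℝ) (α σv σw : ℝ) {d : ℕ} : ℕ → (Fin d → ℝ) → (Fin d → ℝ) → ℝ
  | 0 => fun x y => σw ^ 2 / d * ∑ i, x i * y i
  | ℓ + 1 => fun x y =>
      Kker φ α σv σw ℓ x y + α ^ 2 * σv ^ 2 * σw ^ 2 *
        TT φ (Kker φ α σv σw ℓ x x) (Kker φ α σv σw ℓ x y) (Kker φ α σv σw ℓ y y)


/-- The spectral bounds on a parameter vector: ‖w^{(L+1)}‖₂ ≤ 2√n, ‖U‖ ≤ √d + 2√n, and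
‖W^{(ℓ)}‖, ‖V^{(ℓ)}‖ ≤ 3√n for ℓ = 1,…,L. -/
def SpectralBounds {n L d : ℕ} (θ : Params n L d) : Prop :=
  l2norm (wOut θ) ≤ 2 * Real.sqrt n ∧
  specNorm (Umat θ) ≤ Real.sqrt d + 2 * Real.sqrt n ∧
  ∀ ℓ : ℕ, 1 ≤ ℓ → ℓ ≤ L →
    specNorm (Wmat θ ℓ) ≤ 3 * Real.sqrt n ∧ specNorm (Vmat θ ℓ) ≤ 3 * Real.sqrt n

/-- Auxiliary downward recursion: `deltaAux … k` is δ^{(L−k)}, with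
δ^{(L)} = (σ_w/√n)·w^{(L+1)} and
δ^{(ℓ)} = (I + α(σ_w/√n)W^{(ℓ+1)ᵀ}·diag{φ'(g^{(ℓ+1)})}·(σ_v/√n)V^{(ℓ+1)ᵀ})·δ^{(ℓ+1)}. -/
def deltaAux {n L d : ℕ} (φ : ℝ → ℝ) (α σv σw : ℝ) (θ : Params n L d) (x : Fin d → ℝ) :
    ℕ → Fin n → ℝ
  | 0 => (σw / Real.sqrt n) • wOut θ
  | k + 1 =>
      deltaAux φ α σv σw θ x k +
        (α * σw * σv / (n : ℝ)) •
          ((Wmat θ (L - k)).transpose *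
              Matrix.diagonal (fun i => deriv φ (gvec φ α σv σw θ x (L - k) i)) *
              (Vmat θ (L - k)).transpose).mulVec (deltaAux φ α σv σw θ x k)

/-- δ^{(ℓ)} = ∇_{x^{(ℓ)}} f, for ℓ = 0,…,L. -/
def deltaVec {n L d : ℕ} (φ : ℝ → ℝ) (α σv σw : ℝ) (θ : Params n L d) (x : Fin d → ℝ)
    (ℓ : ℕ) : Fin n → ℝ :=
  deltaAux φ α σv σw θ x (L - ℓ)

/-- γ^{(ℓ)}(θ) = α·(σ_vσ_w/√n)·diag{φ'(g^{(ℓ)})}·V^{(ℓ)ᵀ}·δ^{(ℓ)}(θ). -/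
def gammaVec {n L d : ℕ} (φ : ℝ → ℝ) (α σv σw : ℝ) (θ : Params n L d) (x : Fin d → ℝ)
    (ℓ : ℕ) : Fin n → ℝ :=
  (α * σv * σw / Real.sqrt n) •
    (Matrix.diagonal (fun i => deriv φ (gvec φ α σv σw θ x ℓ i)) *
        (Vmat θ ℓ).transpose).mulVec (deltaVec φ α σv σw θ x ℓ)

/-- z^{(ℓ)}(θ) = α·σ_v·φ(g^{(ℓ)}). -/
def zVec {n L d : ℕ} (φ : ℝ → ℝ) (α σv σw : ℝ) (θ : Params n L d) (x : Fin d → ℝ)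
    (ℓ : ℕ) : Fin n → ℝ :=
  fun i => α * σv * φ (gvec φ α σv σw θ x ℓ i)

namespace RNaux

open Matrix


lemma l2norm_nonneg {k : ℕ} (v : Fin k → ℝ) : 0 ≤ l2norm v := Real.sqrt_nonneg _

lemma sq_l2norm {k : ℕ} (v : Fin k → ℝ) : l2norm v ^ 2 = ∑ i, v i ^ 2 :=
  Real.sq_sqrt (Finset.sum_nonneg fun _ _ => sq_nonneg _)

lemma l2norm_le_of_sq_le {k : ℕ} {v : Fin k → ℝ} {c : ℝ} (hc : 0 ≤ c)
    (h : ∑ i, v i ^ 2 ≤ c ^ 2) : l2norm v ≤ c := by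
  rw [l2norm]
  calc Real.sqrt (∑ i, v i ^ 2) ≤ Real.sqrt (c ^ 2) := Real.sqrt_le_sqrt h
  _ = c := Real.sqrt_sq hc

lemma l2norm_eq_zero {k : ℕ} {v : Fin k → ℝ} (h : l2norm v = 0) : v = 0 := by
  have h0 : (0:ℝ) ≤ ∑ i, v i ^ 2 := Finset.sum_nonneg fun _ _ => sq_nonneg _
  have hs : ∑ i, v i ^ 2 = 0 := le_antisymm (Real.sqrt_eq_zero'.mp h) h0
  funext i
  have := (Finset.sum_eq_zero_iff_of_nonneg (fun i _ => sq_nonneg (v i))).mp hs i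
    (Finset.mem_univ i)
  exact sq_eq_zero_iff.mp this

lemma l2norm_smul {k : ℕ} (c : ℝ) (v : Fin k → ℝ) : l2norm (c • v) = |c| * l2norm v := by
  simp only [l2norm, Pi.smul_apply, smul_eq_mul, mul_pow, ← Finset.mul_sum]
  rw [Real.sqrt_mul (sq_nonneg c), Real.sqrt_sq_eq_abs]

lemma l2norm_add_le {k : ℕ} (u v : Fin k → ℝ) : l2norm (u + v) ≤ l2norm u + l2norm v := by
  have : ∀ w : Fin k → ℝ, l2norm w = ‖(WithLp.equiv 2 (Fin k → ℝ)).symm w‖ := by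
    intro w
    simp [l2norm, EuclideanSpace.norm_eq, Real.norm_eq_abs, sq_abs]
  rw [this, this, this]
  exact norm_add_le _ _

lemma l2norm_sub_le {k : ℕ} (u v w : Fin k → ℝ) :
    l2norm (u - w) ≤ l2norm (u - v) + l2norm (v - w) := by
  have : u - w = (u - v) + (v - w) := by abel
  rw [this]; exact l2norm_add_le _ _

lemma abs_dot_le {k : ℕ} (u v : Fin k → ℝ) : |∑ i, u i * v i| ≤ l2norm u * l2norm v := by
  have h2 : (∑ i, u i * v i) ^ 2 ≤ (l2norm u * l2norm v) ^ 2 := by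
    rw [mul_pow, sq_l2norm, sq_l2norm]
    exact Finset.sum_mul_sq_le_sq_mul_sq _ _ _
  calc |∑ i, u i * v i| = Real.sqrt ((∑ i, u i * v i) ^ 2) := (Real.sqrt_sq_eq_abs _).symm
    _ ≤ Real.sqrt ((l2norm u * l2norm v) ^ 2) := Real.sqrt_le_sqrt h2
    _ = l2norm u * l2norm v :=
        Real.sqrt_sq (mul_nonneg (l2norm_nonneg _) (l2norm_nonneg _))

lemma l2norm_le_pointwise {k : ℕ} {u v : Fin k → ℝ} {c : ℝ} (hc : 0 ≤ c)
    (h : ∀ i, |u i| ≤ c * |v i|) : l2norm u ≤ c * l2norm v := by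
  apply l2norm_le_of_sq_le (mul_nonneg hc (l2norm_nonneg _))
  rw [mul_pow, sq_l2norm, Finset.mul_sum]
  apply Finset.sum_le_sum
  intro i _
  calc u i ^ 2 = |u i| ^ 2 := (sq_abs _).symm
    _ ≤ (c * |v i|) ^ 2 := by
        have := h i
        nlinarith [abs_nonneg (u i), abs_nonneg (v i)]
    _ = c ^ 2 * v i ^ 2 := by rw [mul_pow, sq_abs]

lemma l2norm_hadamard_le {k : ℕ} (a u : Fin k → ℝ) :
    l2norm (fun i => a i * u i) ≤ l2norm a * l2norm u := by
  apply l2norm_le_of_sq_le (mul_nonneg (l2norm_nonneg _) (l2norm_nonneg _))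
  rw [mul_pow, sq_l2norm, sq_l2norm, Finset.mul_sum]
  apply Finset.sum_le_sum
  intro i _
  have h1 : a i ^ 2 ≤ ∑ j, a j ^ 2 :=
    Finset.single_le_sum (fun j _ => sq_nonneg (a j)) (Finset.mem_univ i)
  calc (a i * u i) ^ 2 = a i ^ 2 * u i ^ 2 := by ring
    _ ≤ (∑ j, a j ^ 2) * u i ^ 2 := by nlinarith [sq_nonneg (u i)]

lemma frobNorm_nonneg {m k : ℕ} (A : Matrix (Fin m) (Fin k) ℝ) : 0 ≤ frobNorm A :=
  Real.sqrt_nonneg _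

lemma frobNorm_transpose {m k : ℕ} (A : Matrix (Fin m) (Fin k) ℝ) :
    frobNorm Aᵀ = frobNorm A := by
  rw [frobNorm, frobNorm, Finset.sum_comm]
  rfl

lemma l2norm_mulVec_le_frob {m k : ℕ} (A : Matrix (Fin m) (Fin k) ℝ) (v : Fin k → ℝ) :
    l2norm (A.mulVec v) ≤ frobNorm A * l2norm v := by
  apply l2norm_le_of_sq_le (mul_nonneg (frobNorm_nonneg _) (l2norm_nonneg _))
  have hf : frobNorm A ^ 2 = ∑ i, ∑ j, A i j ^ 2 :=
    Real.sq_sqrt (Finset.sum_nonneg fun _ _ => Finset.sum_nonneg fun _ _ => sq_nonneg _)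
  rw [mul_pow, hf, sq_l2norm]
  calc ∑ i, A.mulVec v i ^ 2 ≤ ∑ i, (∑ j, A i j ^ 2) * ∑ j, v j ^ 2 := by
        apply Finset.sum_le_sum
        intro i _
        simp only [Matrix.mulVec, dotProduct]
        exact Finset.sum_mul_sq_le_sq_mul_sq _ _ _
    _ = (∑ i, ∑ j, A i j ^ 2) * ∑ j, v j ^ 2 := (Finset.sum_mul _ _ _).symm

lemma specSet_bdd {m k : ℕ} (A : Matrix (Fin m) (Fin k) ℝ) :
    BddAbove ((fun v => l2norm (A.mulVec v)) '' {v | l2norm v ≤ 1}) := by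
  refine ⟨frobNorm A, ?_⟩
  rintro _ ⟨v, hv, rfl⟩
  calc l2norm (A.mulVec v) ≤ frobNorm A * l2norm v := l2norm_mulVec_le_frob A v
    _ ≤ frobNorm A * 1 := by
        exact mul_le_mul_of_nonneg_left hv (frobNorm_nonneg A)
    _ = frobNorm A := mul_one _

lemma specNorm_nonneg {m k : ℕ} (A : Matrix (Fin m) (Fin k) ℝ) : 0 ≤ specNorm A := by
  have h0 : (0:ℝ) ∈ (fun v => l2norm (A.mulVec v)) '' {v | l2norm v ≤ 1} := by
    refine ⟨0, ?_, ?_⟩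
    · simp [Set.mem_setOf_eq, l2norm]
    · simp [Matrix.mulVec_zero, l2norm]
  exact le_csSup (specSet_bdd A) h0

lemma l2norm_mulVec_le_spec {m k : ℕ} (A : Matrix (Fin m) (Fin k) ℝ) (v : Fin k → ℝ) :
    l2norm (A.mulVec v) ≤ specNorm A * l2norm v := by
  rcases eq_or_ne (l2norm v) 0 with h | h
  · rw [l2norm_eq_zero h]
    simp only [Matrix.mulVec_zero]
    have : l2norm (0 : Fin m → ℝ) = 0 := by simp [l2norm]
    rw [this]
    have : l2norm (0 : Fin k → ℝ) = 0 := by simp [l2norm]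
    rw [this, mul_zero]
  · have hpos : 0 < l2norm v := lt_of_le_of_ne (l2norm_nonneg v) (Ne.symm h)
    set c := l2norm v with hc
    have hw : l2norm ((c⁻¹) • v) = 1 := by
      rw [l2norm_smul, abs_of_pos (inv_pos.mpr hpos), ← hc, inv_mul_cancel₀ (ne_of_gt hpos)]
    have hmem : l2norm (A.mulVec (c⁻¹ • v)) ∈
        (fun v => l2norm (A.mulVec v)) '' {v | l2norm v ≤ 1} :=
      ⟨c⁻¹ • v, le_of_eq hw, rfl⟩
    have hle : l2norm (A.mulVec (c⁻¹ • v)) ≤ specNorm A := le_csSup (specSet_bdd A) hmem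
    rw [Matrix.mulVec_smul, l2norm_smul, abs_of_pos (inv_pos.mpr hpos)] at hle
    calc l2norm (A.mulVec v) = c * (c⁻¹ * l2norm (A.mulVec v)) := by
          field_simp
      _ ≤ c * specNorm A := by
          apply mul_le_mul_of_nonneg_left _ (le_of_lt hpos)
          simpa using hle
      _ = specNorm A * c := mul_comm _ _

lemma l2norm_transpose_mulVec_le_spec {k : ℕ} (A : Matrix (Fin k) (Fin k) ℝ)
    (v : Fin k → ℝ) : l2norm (Aᵀ.mulVec v) ≤ specNorm A * l2norm v := by
  set w := Aᵀ.mulVec v with hw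
  have key : ∑ i, w i ^ 2 = ∑ j, A.mulVec w j * v j := by
    calc ∑ i, w i ^ 2 = ∑ i, w i * ∑ j, A j i * v j := by
          apply Finset.sum_congr rfl
          intro i _
          rw [sq]
          simp only [hw, Matrix.mulVec, dotProduct, Matrix.transpose_apply]
      _ = ∑ i, ∑ j, w i * (A j i * v j) := by
          simp [Finset.mul_sum]
      _ = ∑ j, ∑ i, w i * (A j i * v j) := Finset.sum_comm
      _ = ∑ j, A.mulVec w j * v j := by
          apply Finset.sum_congr rfl
          intro j _
          simp only [Matrix.mulVec, dotProduct, Finset.sum_mul]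
          apply Finset.sum_congr rfl
          intro i _
          ring
  have h1 : l2norm w ^ 2 ≤ specNorm A * l2norm w * l2norm v := by
    rw [sq_l2norm, key]
    calc ∑ j, A.mulVec w j * v j ≤ |∑ j, A.mulVec w j * v j| := le_abs_self _
      _ ≤ l2norm (A.mulVec w) * l2norm v := abs_dot_le _ _
      _ ≤ specNorm A * l2norm w * l2norm v := by
          apply mul_le_mul_of_nonneg_right (l2norm_mulVec_le_spec A w) (l2norm_nonneg _)
  rcases eq_or_lt_of_le (l2norm_nonneg w) with h | h
  · rw [← h]
    exact mul_nonneg (specNorm_nonneg A) (l2norm_nonneg v)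
  · nlinarith

lemma l2norm_diagonal_mulVec {k : ℕ} (g u : Fin k → ℝ) :
    (Matrix.diagonal g).mulVec u = fun i => g i * u i := by
  funext i
  exact Matrix.mulVec_diagonal g u i



lemma paramNorm_nonneg {n L d : ℕ} (ψ : Params n L d) : 0 ≤ paramNorm ψ :=
  Real.sqrt_nonneg _

lemma sum_comp_le {ι κ : Type*} [Fintype ι] [Fintype κ] [DecidableEq κ] (f : κ → ℝ) (hf : ∀ j, 0 ≤ f j)
    (e : ι → κ) (he : Function.Injective e) : ∑ i, f (e i) ≤ ∑ j, f j := by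
  rw [← Finset.sum_image (f := f) (g := e) (fun x _ y _ h => he h)]
  exact Finset.sum_le_sum_of_subset_of_nonneg (Finset.subset_univ _) fun j _ _ => hf j

lemma block_le_paramNorm {n L d : ℕ} {ι : Type*} [Fintype ι] (ψ : Params n L d)
    (e : ι → ParamIdx n L d) (he : Function.Injective e) :
    Real.sqrt (∑ i, ψ (e i) ^ 2) ≤ paramNorm ψ :=
  Real.sqrt_le_sqrt (sum_comp_le _ (fun _ => sq_nonneg _) e he)

lemma l2norm_wOut_le {n L d : ℕ} (ψ : Params n L d) : l2norm (wOut ψ) ≤ paramNorm ψ :=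
  block_le_paramNorm ψ Sum.inl Sum.inl_injective

lemma wOut_sub {n L d : ℕ} (θ θ' : Params n L d) : wOut θ - wOut θ' = wOut (θ - θ') := rfl

lemma Wmat_sub {n L d : ℕ} (θ θ' : Params n L d) (ℓ : ℕ) :
    Wmat θ ℓ - Wmat θ' ℓ = Wmat (θ - θ') ℓ := by
  unfold Wmat
  by_cases h : 1 ≤ ℓ ∧ ℓ ≤ L
  · simp only [dif_pos h]
    ext i j
    simp [Matrix.sub_apply]
  · simp [dif_neg h]

lemma Vmat_sub {n L d : ℕ} (θ θ' : Params n L d) (ℓ : ℕ) :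
    Vmat θ ℓ - Vmat θ' ℓ = Vmat (θ - θ') ℓ := by
  unfold Vmat
  by_cases h : 1 ≤ ℓ ∧ ℓ ≤ L
  · simp only [dif_pos h]
    ext i j
    simp [Matrix.sub_apply]
  · simp [dif_neg h]

lemma Umat_sub {n L d : ℕ} (θ θ' : Params n L d) :
    Umat θ - Umat θ' = Umat (θ - θ') := by
  ext i j
  simp [Umat, Matrix.sub_apply]

lemma frob_Wmat_le {n L d : ℕ} (ψ : Params n L d) (ℓ : ℕ) (h1 : 1 ≤ ℓ) (h2 : ℓ ≤ L) :
    frobNorm (Wmat ψ ℓ) ≤ paramNorm ψ := by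
  unfold Wmat frobNorm
  rw [dif_pos ⟨h1, h2⟩]
  have hinj : Function.Injective
      (fun p : Fin n × Fin n =>
        (Sum.inr (Sum.inl (⟨ℓ - 1, by omega⟩, p.1, p.2)) : ParamIdx n L d)) := by
    intro a b hab
    simp only [Sum.inr.injEq, Sum.inl.injEq, Prod.mk.injEq, true_and] at hab
    exact Prod.ext hab.1 hab.2
  have := block_le_paramNorm ψ _ hinj
  rw [Fintype.sum_prod_type] at this
  simpa using this

lemma frob_Vmat_le {n L d : ℕ} (ψ : Params n L d) (ℓ : ℕ) (h1 : 1 ≤ ℓ) (h2 : ℓ ≤ L) :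
    frobNorm (Vmat ψ ℓ) ≤ paramNorm ψ := by
  unfold Vmat frobNorm
  rw [dif_pos ⟨h1, h2⟩]
  have hinj : Function.Injective
      (fun p : Fin n × Fin n =>
        (Sum.inr (Sum.inr (Sum.inl (⟨ℓ - 1, by omega⟩, p.1, p.2))) : ParamIdx n L d)) := by
    intro a b hab
    simp only [Sum.inr.injEq, Sum.inl.injEq, Prod.mk.injEq, true_and] at hab
    exact Prod.ext hab.1 hab.2
  have := block_le_paramNorm ψ _ hinj
  rw [Fintype.sum_prod_type] at this
  simpa using this

lemma frob_Umat_le {n L d : ℕ} (ψ : Params n L d) :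
    frobNorm (Umat ψ) ≤ paramNorm ψ := by
  unfold Umat frobNorm
  have hinj : Function.Injective
      (fun p : Fin n × Fin d =>
        (Sum.inr (Sum.inr (Sum.inr (p.1, p.2))) : ParamIdx n L d)) := by
    intro a b hab
    simp only [Sum.inr.injEq, Prod.mk.injEq] at hab
    exact Prod.ext hab.1 hab.2
  have := block_le_paramNorm ψ _ hinj
  rw [Fintype.sum_prod_type] at this
  simpa using this

lemma l2norm_transpose_mulVec_le_frob {k : ℕ} (A : Matrix (Fin k) (Fin k) ℝ)
    (v : Fin k → ℝ) : l2norm (Aᵀ.mulVec v) ≤ frobNorm A * l2norm v := by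
  calc l2norm (Aᵀ.mulVec v) ≤ frobNorm Aᵀ * l2norm v := l2norm_mulVec_le_frob _ _
    _ = frobNorm A * l2norm v := by rw [frobNorm_transpose]

lemma sqrt_one_le {n : ℕ} (hn : 1 ≤ n) : (1:ℝ) ≤ Real.sqrt n := by
  rw [show (1:ℝ) = Real.sqrt 1 by simp]
  exact Real.sqrt_le_sqrt (by exact_mod_cast hn)

lemma xvec_norm_le {n L d : ℕ} (φ : ℝ → ℝ) (α σv σw Cφ B : ℝ)
    (hα : 0 < α) (hσv : 0 < σv) (hσw : 0 < σw) (hCφ : 0 < Cφ) (hB : 0 ≤ B)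
    (hn : 1 ≤ n) (hd : 1 ≤ d)
    (hφ1 : ∀ z, |φ z| ≤ Cφ * |z|)
    (x : Fin d → ℝ) (hx : l2norm x ≤ B)
    (θ : Params n L d) (hθ : SpectralBounds θ) :
    ∀ ℓ, ℓ ≤ L → l2norm (xvec φ α σv σw θ x ℓ) ≤
      3 * B * (1 + 9 * (α * σv * σw * Cφ)) ^ ℓ * Real.sqrt n := by
  have hs : (1:ℝ) ≤ Real.sqrt n := sqrt_one_le hn
  have hs0 : (0:ℝ) < Real.sqrt n := lt_of_lt_of_le one_pos hs
  have hsd : (1:ℝ) ≤ Real.sqrt d := sqrt_one_le hd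
  have hsd0 : (0:ℝ) < Real.sqrt d := lt_of_lt_of_le one_pos hsd
  intro ℓ
  induction ℓ with
  | zero =>
    intro _
    show l2norm ((Real.sqrt d)⁻¹ • (Umat θ).mulVec x) ≤ _
    rw [l2norm_smul, abs_of_pos (inv_pos.mpr hsd0)]
    have h1 : l2norm ((Umat θ).mulVec x) ≤ (Real.sqrt d + 2 * Real.sqrt n) * B := by
      calc l2norm ((Umat θ).mulVec x) ≤ specNorm (Umat θ) * l2norm x :=
            l2norm_mulVec_le_spec _ _
        _ ≤ (Real.sqrt d + 2 * Real.sqrt n) * B :=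
            mul_le_mul hθ.2.1 hx (l2norm_nonneg _) (by positivity)
    have h2 : (Real.sqrt d)⁻¹ * l2norm ((Umat θ).mulVec x) ≤
        (Real.sqrt d)⁻¹ * ((Real.sqrt d + 2 * Real.sqrt n) * B) :=
      mul_le_mul_of_nonneg_left h1 (by positivity)
    have h3 : (Real.sqrt d + 2 * Real.sqrt n) * B ≤ 3 * Real.sqrt n * Real.sqrt d * B := by
      have h3' : Real.sqrt d + 2 * Real.sqrt n ≤ 3 * Real.sqrt n * Real.sqrt d := by
        nlinarith
      exact mul_le_mul_of_nonneg_right h3' hB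
    have h4 : (Real.sqrt d)⁻¹ * (3 * Real.sqrt n * Real.sqrt d * B) =
        3 * B * Real.sqrt n := by
      field_simp
    have h5 : (Real.sqrt d)⁻¹ * ((Real.sqrt d + 2 * Real.sqrt n) * B) ≤ 3 * B * Real.sqrt n := by
      rw [← h4]
      exact mul_le_mul_of_nonneg_left h3 (by positivity)
    calc (Real.sqrt d)⁻¹ * l2norm ((Umat θ).mulVec x) ≤ 3 * B * Real.sqrt n := le_trans h2 h5
      _ = 3 * B * (1 + 9 * (α * σv * σw * Cφ)) ^ 0 * Real.sqrt n := by rw [pow_zero, mul_one]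
  | succ ℓ ih =>
    intro hℓ
    have hℓL : ℓ ≤ L := Nat.le_of_succ_le hℓ
    have ihℓ := ih hℓL
    obtain ⟨hW, hV⟩ := hθ.2.2 (ℓ + 1) (Nat.succ_le_succ (Nat.zero_le _)) hℓ
    set X := xvec φ α σv σw θ x ℓ with hX
    set p : Fin n → ℝ :=
      fun i => φ ((σw / Real.sqrt n) * (Wmat θ (ℓ + 1)).mulVec X i) with hp
    have hMX : l2norm ((Wmat θ (ℓ + 1)).mulVec X) ≤ 3 * Real.sqrt n * l2norm X := by
      calc l2norm ((Wmat θ (ℓ + 1)).mulVec X) ≤ specNorm (Wmat θ (ℓ + 1)) * l2norm X :=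
            l2norm_mulVec_le_spec _ _
        _ ≤ 3 * Real.sqrt n * l2norm X :=
            mul_le_mul_of_nonneg_right hW (l2norm_nonneg _)
    have hgn : l2norm ((σw / Real.sqrt n) • (Wmat θ (ℓ + 1)).mulVec X) ≤
        3 * σw * l2norm X := by
      rw [l2norm_smul, abs_of_pos (by positivity)]
      calc (σw / Real.sqrt n) * l2norm ((Wmat θ (ℓ + 1)).mulVec X) ≤
            (σw / Real.sqrt n) * (3 * Real.sqrt n * l2norm X) :=
            mul_le_mul_of_nonneg_left hMX (by positivity)
        _ = 3 * σw * l2norm X := by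
            field_simp
    have hpn : l2norm p ≤ Cφ * (3 * σw * l2norm X) := by
      have h1 : l2norm p ≤ Cφ * l2norm ((σw / Real.sqrt n) • (Wmat θ (ℓ + 1)).mulVec X) := by
        apply l2norm_le_pointwise (le_of_lt hCφ)
        intro i
        simpa [Pi.smul_apply, smul_eq_mul] using hφ1 ((σw / Real.sqrt n) *
          (Wmat θ (ℓ + 1)).mulVec X i)
      calc l2norm p ≤ Cφ * l2norm ((σw / Real.sqrt n) • (Wmat θ (ℓ + 1)).mulVec X) := h1
        _ ≤ Cφ * (3 * σw * l2norm X) := mul_le_mul_of_nonneg_left hgn (le_of_lt hCφ)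
    have hVp : l2norm ((Vmat θ (ℓ + 1)).mulVec p) ≤
        3 * Real.sqrt n * (Cφ * (3 * σw * l2norm X)) := by
      calc l2norm ((Vmat θ (ℓ + 1)).mulVec p) ≤ specNorm (Vmat θ (ℓ + 1)) * l2norm p :=
            l2norm_mulVec_le_spec _ _
        _ ≤ 3 * Real.sqrt n * (Cφ * (3 * σw * l2norm X)) :=
            mul_le_mul hV hpn (l2norm_nonneg _) (by positivity)
    have hterm : l2norm ((α * σv / Real.sqrt n) • (Vmat θ (ℓ + 1)).mulVec p) ≤
        9 * (α * σv * σw * Cφ) * l2norm X := by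
      rw [l2norm_smul, abs_of_pos (by positivity)]
      calc (α * σv / Real.sqrt n) * l2norm ((Vmat θ (ℓ + 1)).mulVec p) ≤
            (α * σv / Real.sqrt n) * (3 * Real.sqrt n * (Cφ * (3 * σw * l2norm X))) :=
            mul_le_mul_of_nonneg_left hVp (by positivity)
        _ = 9 * (α * σv * σw * Cφ) * l2norm X := by
            field_simp
            ring
    have hsum : l2norm (xvec φ α σv σw θ x (ℓ + 1)) ≤
        (1 + 9 * (α * σv * σw * Cφ)) * l2norm X := by
      show l2norm (X + (α * σv / Real.sqrt n) • (Vmat θ (ℓ + 1)).mulVec p) ≤ _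
      calc l2norm (X + (α * σv / Real.sqrt n) • (Vmat θ (ℓ + 1)).mulVec p) ≤
            l2norm X + l2norm ((α * σv / Real.sqrt n) • (Vmat θ (ℓ + 1)).mulVec p) :=
            l2norm_add_le _ _
        _ ≤ l2norm X + 9 * (α * σv * σw * Cφ) * l2norm X := by linarith
        _ = (1 + 9 * (α * σv * σw * Cφ)) * l2norm X := by ring
    have ha : (0:ℝ) < 1 + 9 * (α * σv * σw * Cφ) := by positivity
    calc l2norm (xvec φ α σv σw θ x (ℓ + 1)) ≤
          (1 + 9 * (α * σv * σw * Cφ)) * l2norm X := hsum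
      _ ≤ (1 + 9 * (α * σv * σw * Cφ)) *
          (3 * B * (1 + 9 * (α * σv * σw * Cφ)) ^ ℓ * Real.sqrt n) :=
          mul_le_mul_of_nonneg_left ihℓ (le_of_lt ha)
      _ = 3 * B * (1 + 9 * (α * σv * σw * Cφ)) ^ (ℓ + 1) * Real.sqrt n := by
          rw [pow_succ]
          ring

lemma gvec_norm_le {n L d : ℕ} (φ : ℝ → ℝ) (α σv σw Cφ B : ℝ)
    (hα : 0 < α) (hσv : 0 < σv) (hσw : 0 < σw) (hCφ : 0 < Cφ) (hB : 0 ≤ B)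
    (hn : 1 ≤ n) (hd : 1 ≤ d)
    (hφ1 : ∀ z, |φ z| ≤ Cφ * |z|)
    (x : Fin d → ℝ) (hx : l2norm x ≤ B)
    (θ : Params n L d) (hθ : SpectralBounds θ) :
    ∀ ℓ, 1 ≤ ℓ → ℓ ≤ L → l2norm (gvec φ α σv σw θ x ℓ) ≤
      9 * σw * B * (1 + 9 * (α * σv * σw * Cφ)) ^ L * Real.sqrt n := by
  intro ℓ h1 h2
  have hs : (1:ℝ) ≤ Real.sqrt n := sqrt_one_le hn
  have hs0 : (0:ℝ) < Real.sqrt n := lt_of_lt_of_le one_pos hs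
  have hxb := xvec_norm_le φ α σv σw Cφ B hα hσv hσw hCφ hB hn hd hφ1 x hx θ hθ
    (ℓ - 1) (by omega)
  obtain ⟨hW, _⟩ := hθ.2.2 ℓ h1 h2
  have ha : (1:ℝ) ≤ 1 + 9 * (α * σv * σw * Cφ) := by
    have := mul_pos (mul_pos (mul_pos hα hσv) hσw) hCφ
    linarith
  have hpow : (1 + 9 * (α * σv * σw * Cφ)) ^ (ℓ - 1) ≤
      (1 + 9 * (α * σv * σw * Cφ)) ^ L := pow_le_pow_right₀ ha (by omega)
  have hMX : l2norm ((Wmat θ ℓ).mulVec (xvec φ α σv σw θ x (ℓ - 1))) ≤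
      3 * Real.sqrt n * (3 * B * (1 + 9 * (α * σv * σw * Cφ)) ^ (ℓ - 1) * Real.sqrt n) := by
    calc l2norm ((Wmat θ ℓ).mulVec (xvec φ α σv σw θ x (ℓ - 1))) ≤
          specNorm (Wmat θ ℓ) * l2norm (xvec φ α σv σw θ x (ℓ - 1)) :=
          l2norm_mulVec_le_spec _ _
      _ ≤ 3 * Real.sqrt n * (3 * B * (1 + 9 * (α * σv * σw * Cφ)) ^ (ℓ - 1) * Real.sqrt n) :=
          mul_le_mul hW hxb (l2norm_nonneg _) (by positivity)
  show l2norm ((σw / Real.sqrt n) • _) ≤ _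
  rw [l2norm_smul, abs_of_pos (by positivity)]
  have key : (σw / Real.sqrt n) *
      (3 * Real.sqrt n * (3 * B * (1 + 9 * (α * σv * σw * Cφ)) ^ (ℓ - 1) * Real.sqrt n)) =
      9 * σw * B * (1 + 9 * (α * σv * σw * Cφ)) ^ (ℓ - 1) * Real.sqrt n := by
    field_simp
    ring
  calc (σw / Real.sqrt n) * l2norm ((Wmat θ ℓ).mulVec (xvec φ α σv σw θ x (ℓ - 1))) ≤
        (σw / Real.sqrt n) *
          (3 * Real.sqrt n * (3 * B * (1 + 9 * (α * σv * σw * Cφ)) ^ (ℓ - 1) * Real.sqrt n)) :=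
        mul_le_mul_of_nonneg_left hMX (by positivity)
    _ = 9 * σw * B * (1 + 9 * (α * σv * σw * Cφ)) ^ (ℓ - 1) * Real.sqrt n := key
    _ ≤ 9 * σw * B * (1 + 9 * (α * σv * σw * Cφ)) ^ L * Real.sqrt n :=
        mul_le_mul_of_nonneg_right
          (mul_le_mul_of_nonneg_left hpow (by positivity)) (Real.sqrt_nonneg _)

lemma deltaAux_norm_le {n L d : ℕ} (φ : ℝ → ℝ) (α σv σw Cφ B : ℝ)
    (hα : 0 < α) (hσv : 0 < σv) (hσw : 0 < σw) (hCφ : 0 < Cφ) (hB : 0 ≤ B)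
    (hn : 1 ≤ n) (hd : 1 ≤ d)
    (hφ' : ∀ z, |deriv φ z| ≤ Cφ)
    (x : Fin d → ℝ)
    (θ : Params n L d) (hθ : SpectralBounds θ) :
    ∀ k, k ≤ L → l2norm (deltaAux φ α σv σw θ x k) ≤
      2 * σw * (1 + 9 * (α * σv * σw * Cφ)) ^ k := by
  have hs : (1:ℝ) ≤ Real.sqrt n := sqrt_one_le hn
  have hs0 : (0:ℝ) < Real.sqrt n := lt_of_lt_of_le one_pos hs
  have hnn : Real.sqrt n * Real.sqrt n = (n:ℝ) := Real.mul_self_sqrt (by positivity)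
  have hn0 : (0:ℝ) < (n:ℝ) := by exact_mod_cast hn
  intro k
  induction k with
  | zero =>
    intro _
    show l2norm ((σw / Real.sqrt n) • wOut θ) ≤ _
    rw [l2norm_smul, abs_of_pos (by positivity), pow_zero, mul_one]
    calc (σw / Real.sqrt n) * l2norm (wOut θ) ≤ (σw / Real.sqrt n) * (2 * Real.sqrt n) :=
          mul_le_mul_of_nonneg_left hθ.1 (by positivity)
      _ = 2 * σw := by field_simp
  | succ k ih =>
    intro hk
    have hkL : k ≤ L := Nat.le_of_succ_le hk
    have ihk := ih hkL
    have hm1 : 1 ≤ L - k := by omega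
    have hm2 : L - k ≤ L := by omega
    obtain ⟨hW, hV⟩ := hθ.2.2 (L - k) hm1 hm2
    set δ := deltaAux φ α σv σw θ x k with hδ
    set D : Matrix (Fin n) (Fin n) ℝ :=
      Matrix.diagonal (fun i => deriv φ (gvec φ α σv σw θ x (L - k) i)) with hD
    have hsplit : ((Wmat θ (L - k))ᵀ * D * (Vmat θ (L - k))ᵀ).mulVec δ =
        (Wmat θ (L - k))ᵀ.mulVec (D.mulVec ((Vmat θ (L - k))ᵀ.mulVec δ)) := by
      rw [Matrix.mulVec_mulVec, Matrix.mulVec_mulVec, mul_assoc]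
    have hVd : l2norm ((Vmat θ (L - k))ᵀ.mulVec δ) ≤ 3 * Real.sqrt n * l2norm δ := by
      calc l2norm ((Vmat θ (L - k))ᵀ.mulVec δ) ≤ specNorm (Vmat θ (L - k)) * l2norm δ :=
            l2norm_transpose_mulVec_le_spec _ _
        _ ≤ 3 * Real.sqrt n * l2norm δ :=
            mul_le_mul_of_nonneg_right hV (l2norm_nonneg _)
    have hDd : ∀ u : Fin n → ℝ, l2norm (D.mulVec u) ≤ Cφ * l2norm u := by
      intro u
      rw [hD, l2norm_diagonal_mulVec]
      apply l2norm_le_pointwise (le_of_lt hCφ)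
      intro i
      rw [abs_mul]
      exact mul_le_mul_of_nonneg_right (hφ' _) (abs_nonneg _)
    have hWd : ∀ w : Fin n → ℝ, l2norm ((Wmat θ (L - k))ᵀ.mulVec w) ≤
        3 * Real.sqrt n * l2norm w := by
      intro w
      calc l2norm ((Wmat θ (L - k))ᵀ.mulVec w) ≤ specNorm (Wmat θ (L - k)) * l2norm w :=
            l2norm_transpose_mulVec_le_spec _ _
        _ ≤ 3 * Real.sqrt n * l2norm w :=
            mul_le_mul_of_nonneg_right hW (l2norm_nonneg _)
    have hchain : l2norm (((Wmat θ (L - k))ᵀ * D * (Vmat θ (L - k))ᵀ).mulVec δ) ≤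
        3 * Real.sqrt n * (Cφ * (3 * Real.sqrt n * l2norm δ)) := by
      rw [hsplit]
      calc l2norm ((Wmat θ (L - k))ᵀ.mulVec (D.mulVec ((Vmat θ (L - k))ᵀ.mulVec δ))) ≤
            3 * Real.sqrt n * l2norm (D.mulVec ((Vmat θ (L - k))ᵀ.mulVec δ)) := hWd _
        _ ≤ 3 * Real.sqrt n * (Cφ * (3 * Real.sqrt n * l2norm δ)) := by
            apply mul_le_mul_of_nonneg_left _ (by positivity)
            calc l2norm (D.mulVec ((Vmat θ (L - k))ᵀ.mulVec δ)) ≤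
                  Cφ * l2norm ((Vmat θ (L - k))ᵀ.mulVec δ) := hDd _
              _ ≤ Cφ * (3 * Real.sqrt n * l2norm δ) :=
                  mul_le_mul_of_nonneg_left hVd (le_of_lt hCφ)
    have hterm : l2norm ((α * σw * σv / (n : ℝ)) •
        ((Wmat θ (L - k))ᵀ * D * (Vmat θ (L - k))ᵀ).mulVec δ) ≤
        9 * (α * σv * σw * Cφ) * l2norm δ := by
      rw [l2norm_smul, abs_of_pos (by positivity)]
      calc (α * σw * σv / (n : ℝ)) *
            l2norm (((Wmat θ (L - k))ᵀ * D * (Vmat θ (L - k))ᵀ).mulVec δ) ≤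
            (α * σw * σv / (n : ℝ)) * (3 * Real.sqrt n * (Cφ * (3 * Real.sqrt n * l2norm δ))) :=
            mul_le_mul_of_nonneg_left hchain (by positivity)
        _ = 9 * (α * σv * σw * Cφ) * l2norm δ := by
            field_simp
            ring_nf
            rw [Real.sq_sqrt (by positivity : (0:ℝ) ≤ (n:ℝ))]
            ring
    have hsum : l2norm (deltaAux φ α σv σw θ x (k + 1)) ≤
        (1 + 9 * (α * σv * σw * Cφ)) * l2norm δ := by
      show l2norm (δ + _) ≤ _
      calc l2norm (δ + (α * σw * σv / (n : ℝ)) •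
            ((Wmat θ (L - k))ᵀ * D * (Vmat θ (L - k))ᵀ).mulVec δ) ≤
            l2norm δ + l2norm ((α * σw * σv / (n : ℝ)) •
              ((Wmat θ (L - k))ᵀ * D * (Vmat θ (L - k))ᵀ).mulVec δ) := l2norm_add_le _ _
        _ ≤ (1 + 9 * (α * σv * σw * Cφ)) * l2norm δ := by
            have := hterm
            nlinarith [l2norm_nonneg δ]
    have ha : (0:ℝ) < 1 + 9 * (α * σv * σw * Cφ) := by positivity
    calc l2norm (deltaAux φ α σv σw θ x (k + 1)) ≤
          (1 + 9 * (α * σv * σw * Cφ)) * l2norm δ := hsum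
      _ ≤ (1 + 9 * (α * σv * σw * Cφ)) * (2 * σw * (1 + 9 * (α * σv * σw * Cφ)) ^ k) :=
          mul_le_mul_of_nonneg_left ihk (le_of_lt ha)
      _ = 2 * σw * (1 + 9 * (α * σv * σw * Cφ)) ^ (k + 1) := by
          rw [pow_succ]
          ring

set_option maxHeartbeats 1000000 in
lemma xvec_lip (L d : ℕ) (hL : 1 ≤ L) (hd : 1 ≤ d)
    (α σv σw Cφ B : ℝ) (hα : 0 < α) (hσv : 0 < σv) (hσw : 0 < σw) (hCφ : 0 < Cφ)
    (hB : 0 ≤ B) :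
    ∃ C : ℝ, 0 < C ∧
      ∀ (n : ℕ), 1 ≤ n → ∀ φ : ℝ → ℝ,
        (∀ z : ℝ, |φ z| ≤ Cφ * |z|) →
        (∀ z z' : ℝ, |φ z - φ z'| ≤ Cφ * |z - z'|) →
        ∀ x : Fin d → ℝ, l2norm x ≤ B →
        ∀ θ θ' : Params n L d, SpectralBounds θ → SpectralBounds θ' →
          ∀ ℓ : ℕ, ℓ ≤ L →
            l2norm (xvec φ α σv σw θ x ℓ - xvec φ α σv σw θ' x ℓ) ≤
              C * paramNorm (θ - θ') := by
  set P := α * σv * σw * Cφ with hPdef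
  have hP : 0 < P := by positivity
  set Xc := 3 * B * (1 + 9 * P) ^ L with hXc
  have hXc0 : 0 ≤ Xc := by positivity
  set C0 := B + 6 * P * Xc + 1 with hC0
  have hC00 : 0 < C0 := by positivity
  have ha1 : (1:ℝ) ≤ 2 + 9 * P := by nlinarith
  refine ⟨C0 * (2 + 9 * P) ^ L, by positivity, ?_⟩
  intro n hn φ hφ1 hφL x hx θ θ' hθ hθ'
  have hs : (1:ℝ) ≤ Real.sqrt n := sqrt_one_le hn
  have hs0 : (0:ℝ) < Real.sqrt n := lt_of_lt_of_le one_pos hs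
  have hsd : (1:ℝ) ≤ Real.sqrt d := sqrt_one_le hd
  have hsd0 : (0:ℝ) < Real.sqrt d := lt_of_lt_of_le one_pos hsd
  set Δ := paramNorm (θ - θ') with hΔdef
  have hΔ : 0 ≤ Δ := paramNorm_nonneg _
  -- uniform bound on ‖x^{(ℓ)}(θ)‖
  have hxn : ∀ ℓ, ℓ ≤ L → l2norm (xvec φ α σv σw θ x ℓ) ≤ Xc * Real.sqrt n := by
    intro ℓ hℓ
    have h := xvec_norm_le φ α σv σw Cφ B hα hσv hσw hCφ hB hn hd hφ1 x hx θ hθ ℓ hℓ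
    have hpow : (1 + 9 * P) ^ ℓ ≤ (1 + 9 * P) ^ L :=
      pow_le_pow_right₀ (by nlinarith) hℓ
    calc l2norm (xvec φ α σv σw θ x ℓ) ≤ 3 * B * (1 + 9 * P) ^ ℓ * Real.sqrt n := h
      _ ≤ Xc * Real.sqrt n := by
          rw [hXc]
          exact mul_le_mul_of_nonneg_right
            (mul_le_mul_of_nonneg_left hpow (by positivity)) (le_of_lt hs0)
  have main : ∀ ℓ, ℓ ≤ L →
      l2norm (xvec φ α σv σw θ x ℓ - xvec φ α σv σw θ' x ℓ) ≤
        C0 * (2 + 9 * P) ^ ℓ * Δ := by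
    intro ℓ
    induction ℓ with
    | zero =>
      intro _
      have heq : xvec φ α σv σw θ x 0 - xvec φ α σv σw θ' x 0 =
          (Real.sqrt d)⁻¹ • (Umat (θ - θ')).mulVec x := by
        show (Real.sqrt d)⁻¹ • (Umat θ).mulVec x -
            (Real.sqrt d)⁻¹ • (Umat θ').mulVec x = _
        rw [← smul_sub, ← Matrix.sub_mulVec, Umat_sub]
      rw [heq, l2norm_smul, abs_of_pos (inv_pos.mpr hsd0)]
      have h1 : l2norm ((Umat (θ - θ')).mulVec x) ≤ Δ * B := by
        calc l2norm ((Umat (θ - θ')).mulVec x) ≤ frobNorm (Umat (θ - θ')) * l2norm x :=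
              l2norm_mulVec_le_frob _ _
          _ ≤ Δ * B := mul_le_mul (frob_Umat_le _) hx (l2norm_nonneg _) hΔ
      have h2 : (Real.sqrt d)⁻¹ ≤ 1 := by
        rw [inv_le_one_iff₀]
        right
        exact hsd
      calc (Real.sqrt d)⁻¹ * l2norm ((Umat (θ - θ')).mulVec x) ≤ 1 * (Δ * B) := by
            apply mul_le_mul h2 h1 (l2norm_nonneg _) zero_le_one
        _ = B * Δ := by ring
        _ ≤ C0 * (2 + 9 * P) ^ 0 * Δ := by
            rw [pow_zero, mul_one]
            have : B ≤ C0 := by rw [hC0]; nlinarith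
            nlinarith
    | succ ℓ ih =>
      intro hℓ
      have hℓL : ℓ ≤ L := Nat.le_of_succ_le hℓ
      have ihℓ := ih hℓL
      obtain ⟨hW, hV⟩ := hθ.2.2 (ℓ + 1) (Nat.succ_le_succ (Nat.zero_le _)) hℓ
      obtain ⟨hW', hV'⟩ := hθ'.2.2 (ℓ + 1) (Nat.succ_le_succ (Nat.zero_le _)) hℓ
      set X := xvec φ α σv σw θ x ℓ with hX
      set X' := xvec φ α σv σw θ' x ℓ with hX'
      set q : Fin n → ℝ := (σw / Real.sqrt n) • (Wmat θ (ℓ + 1)).mulVec X with hq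
      set q' : Fin n → ℝ := (σw / Real.sqrt n) • (Wmat θ' (ℓ + 1)).mulVec X' with hq'
      set p : Fin n → ℝ := fun i => φ (q i) with hp
      set p' : Fin n → ℝ := fun i => φ (q' i) with hp'
      have hdx : l2norm (X - X') ≤ C0 * (2 + 9 * P) ^ ℓ * Δ := ihℓ
      -- bound on ‖q - q'‖
      have hqd : l2norm (q - q') ≤ σw * Xc * Δ + 3 * σw * l2norm (X - X') := by
        have hsplit : q - q' = (σw / Real.sqrt n) •
            ((Wmat (θ - θ') (ℓ + 1)).mulVec X + (Wmat θ' (ℓ + 1)).mulVec (X - X')) := by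
          rw [hq, hq', ← smul_sub]
          congr 1
          rw [← Wmat_sub, Matrix.sub_mulVec, Matrix.mulVec_sub]
          abel
        rw [hsplit, l2norm_smul, abs_of_pos (by positivity)]
        have h1 : l2norm ((Wmat (θ - θ') (ℓ + 1)).mulVec X) ≤ Δ * (Xc * Real.sqrt n) := by
          calc l2norm ((Wmat (θ - θ') (ℓ + 1)).mulVec X) ≤
                frobNorm (Wmat (θ - θ') (ℓ + 1)) * l2norm X := l2norm_mulVec_le_frob _ _
            _ ≤ Δ * (Xc * Real.sqrt n) :=
                mul_le_mul (frob_Wmat_le _ _ (Nat.succ_le_succ (Nat.zero_le _)) hℓ)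
                  (hxn ℓ hℓL) (l2norm_nonneg _) hΔ
        have h2 : l2norm ((Wmat θ' (ℓ + 1)).mulVec (X - X')) ≤
            3 * Real.sqrt n * l2norm (X - X') := by
          calc l2norm ((Wmat θ' (ℓ + 1)).mulVec (X - X')) ≤
                specNorm (Wmat θ' (ℓ + 1)) * l2norm (X - X') := l2norm_mulVec_le_spec _ _
            _ ≤ 3 * Real.sqrt n * l2norm (X - X') :=
                mul_le_mul_of_nonneg_right hW' (l2norm_nonneg _)
        have h3 : l2norm ((Wmat (θ - θ') (ℓ + 1)).mulVec X +
            (Wmat θ' (ℓ + 1)).mulVec (X - X')) ≤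
            Δ * (Xc * Real.sqrt n) + 3 * Real.sqrt n * l2norm (X - X') := by
          calc _ ≤ l2norm ((Wmat (θ - θ') (ℓ + 1)).mulVec X) +
                l2norm ((Wmat θ' (ℓ + 1)).mulVec (X - X')) := l2norm_add_le _ _
            _ ≤ _ := add_le_add h1 h2
        calc (σw / Real.sqrt n) * l2norm ((Wmat (θ - θ') (ℓ + 1)).mulVec X +
              (Wmat θ' (ℓ + 1)).mulVec (X - X')) ≤
              (σw / Real.sqrt n) *
                (Δ * (Xc * Real.sqrt n) + 3 * Real.sqrt n * l2norm (X - X')) :=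
              mul_le_mul_of_nonneg_left h3 (by positivity)
          _ = σw * Xc * Δ + 3 * σw * l2norm (X - X') := by
              field_simp
      -- bound on ‖p‖
      have hpn : l2norm p ≤ 3 * Cφ * σw * Xc * Real.sqrt n := by
        have h1 : l2norm p ≤ Cφ * l2norm q := by
          apply l2norm_le_pointwise (le_of_lt hCφ)
          intro i
          exact hφ1 (q i)
        have h2 : l2norm q ≤ 3 * σw * (Xc * Real.sqrt n) := by
          rw [hq, l2norm_smul, abs_of_pos (by positivity)]
          have h3 : l2norm ((Wmat θ (ℓ + 1)).mulVec X) ≤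
              3 * Real.sqrt n * (Xc * Real.sqrt n) := by
            calc l2norm ((Wmat θ (ℓ + 1)).mulVec X) ≤
                  specNorm (Wmat θ (ℓ + 1)) * l2norm X := l2norm_mulVec_le_spec _ _
              _ ≤ 3 * Real.sqrt n * (Xc * Real.sqrt n) :=
                  mul_le_mul hW (hxn ℓ hℓL) (l2norm_nonneg _) (by positivity)
          calc (σw / Real.sqrt n) * l2norm ((Wmat θ (ℓ + 1)).mulVec X) ≤
                (σw / Real.sqrt n) * (3 * Real.sqrt n * (Xc * Real.sqrt n)) :=
                mul_le_mul_of_nonneg_left h3 (by positivity)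
            _ = 3 * σw * (Xc * Real.sqrt n) := by
                field_simp
        calc l2norm p ≤ Cφ * l2norm q := h1
          _ ≤ Cφ * (3 * σw * (Xc * Real.sqrt n)) :=
              mul_le_mul_of_nonneg_left h2 (le_of_lt hCφ)
          _ = 3 * Cφ * σw * Xc * Real.sqrt n := by ring
      -- bound on ‖p - p'‖
      have hpd : l2norm (p - p') ≤ Cφ * l2norm (q - q') := by
        apply l2norm_le_pointwise (le_of_lt hCφ)
        intro i
        show |p i - p' i| ≤ Cφ * |(q - q') i|
        rw [Pi.sub_apply]
        exact hφL (q i) (q' i)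
      -- bound on ‖V p - V' p'‖
      have hVd : l2norm ((Vmat θ (ℓ + 1)).mulVec p - (Vmat θ' (ℓ + 1)).mulVec p') ≤
          Δ * (3 * Cφ * σw * Xc * Real.sqrt n) +
            3 * Real.sqrt n * (Cφ * (σw * Xc * Δ + 3 * σw * l2norm (X - X'))) := by
        have hsplit : (Vmat θ (ℓ + 1)).mulVec p - (Vmat θ' (ℓ + 1)).mulVec p' =
            (Vmat (θ - θ') (ℓ + 1)).mulVec p + (Vmat θ' (ℓ + 1)).mulVec (p - p') := by
          rw [← Vmat_sub, Matrix.sub_mulVec, Matrix.mulVec_sub]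
          abel
        rw [hsplit]
        have h1 : l2norm ((Vmat (θ - θ') (ℓ + 1)).mulVec p) ≤
            Δ * (3 * Cφ * σw * Xc * Real.sqrt n) :=
          calc l2norm ((Vmat (θ - θ') (ℓ + 1)).mulVec p) ≤
                frobNorm (Vmat (θ - θ') (ℓ + 1)) * l2norm p := l2norm_mulVec_le_frob _ _
            _ ≤ Δ * (3 * Cφ * σw * Xc * Real.sqrt n) :=
                mul_le_mul (frob_Vmat_le _ _ (Nat.succ_le_succ (Nat.zero_le _)) hℓ)
                  hpn (l2norm_nonneg _) hΔ
        have h2 : l2norm ((Vmat θ' (ℓ + 1)).mulVec (p - p')) ≤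
            3 * Real.sqrt n * (Cφ * (σw * Xc * Δ + 3 * σw * l2norm (X - X'))) := by
          calc l2norm ((Vmat θ' (ℓ + 1)).mulVec (p - p')) ≤
                specNorm (Vmat θ' (ℓ + 1)) * l2norm (p - p') := l2norm_mulVec_le_spec _ _
            _ ≤ 3 * Real.sqrt n * (Cφ * (σw * Xc * Δ + 3 * σw * l2norm (X - X'))) := by
                apply mul_le_mul hV' _ (l2norm_nonneg _) (by positivity)
                calc l2norm (p - p') ≤ Cφ * l2norm (q - q') := hpd
                  _ ≤ Cφ * (σw * Xc * Δ + 3 * σw * l2norm (X - X')) :=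
                      mul_le_mul_of_nonneg_left hqd (le_of_lt hCφ)
        calc _ ≤ l2norm ((Vmat (θ - θ') (ℓ + 1)).mulVec p) +
              l2norm ((Vmat θ' (ℓ + 1)).mulVec (p - p')) := l2norm_add_le _ _
          _ ≤ _ := add_le_add h1 h2
      -- assemble
      have heq : xvec φ α σv σw θ x (ℓ + 1) - xvec φ α σv σw θ' x (ℓ + 1) =
          (X - X') + (α * σv / Real.sqrt n) •
            ((Vmat θ (ℓ + 1)).mulVec p - (Vmat θ' (ℓ + 1)).mulVec p') := by
        show (X + (α * σv / Real.sqrt n) • (Vmat θ (ℓ + 1)).mulVec p) -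
            (X' + (α * σv / Real.sqrt n) • (Vmat θ' (ℓ + 1)).mulVec p') = _
        rw [smul_sub]
        abel
      have hfin : l2norm (xvec φ α σv σw θ x (ℓ + 1) - xvec φ α σv σw θ' x (ℓ + 1)) ≤
          (1 + 9 * P) * l2norm (X - X') + 6 * P * Xc * Δ := by
        rw [heq]
        have h1 : l2norm ((α * σv / Real.sqrt n) •
            ((Vmat θ (ℓ + 1)).mulVec p - (Vmat θ' (ℓ + 1)).mulVec p')) ≤
            9 * P * l2norm (X - X') + 6 * P * Xc * Δ := by
          rw [l2norm_smul, abs_of_pos (by positivity)]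
          calc (α * σv / Real.sqrt n) *
                l2norm ((Vmat θ (ℓ + 1)).mulVec p - (Vmat θ' (ℓ + 1)).mulVec p') ≤
                (α * σv / Real.sqrt n) *
                  (Δ * (3 * Cφ * σw * Xc * Real.sqrt n) +
                    3 * Real.sqrt n * (Cφ * (σw * Xc * Δ + 3 * σw * l2norm (X - X')))) :=
                mul_le_mul_of_nonneg_left hVd (by positivity)
            _ = 9 * P * l2norm (X - X') + 6 * P * Xc * Δ := by
                rw [hPdef]
                field_simp
                ring
        calc l2norm ((X - X') + (α * σv / Real.sqrt n) •
              ((Vmat θ (ℓ + 1)).mulVec p - (Vmat θ' (ℓ + 1)).mulVec p')) ≤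
              l2norm (X - X') + l2norm ((α * σv / Real.sqrt n) •
                ((Vmat θ (ℓ + 1)).mulVec p - (Vmat θ' (ℓ + 1)).mulVec p')) :=
              l2norm_add_le _ _
          _ ≤ l2norm (X - X') + (9 * P * l2norm (X - X') + 6 * P * Xc * Δ) :=
              add_le_add_right h1 _
          _ = (1 + 9 * P) * l2norm (X - X') + 6 * P * Xc * Δ := by ring
      have hA1 : (1:ℝ) ≤ (2 + 9 * P) ^ ℓ := one_le_pow₀ ha1
      have hC6 : 6 * P * Xc ≤ C0 := by rw [hC0]; nlinarith
      calc l2norm (xvec φ α σv σw θ x (ℓ + 1) - xvec φ α σv σw θ' x (ℓ + 1)) ≤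
            (1 + 9 * P) * l2norm (X - X') + 6 * P * Xc * Δ := hfin
        _ ≤ (1 + 9 * P) * (C0 * (2 + 9 * P) ^ ℓ * Δ) + 6 * P * Xc * Δ :=
            add_le_add_left (mul_le_mul_of_nonneg_left hdx (by positivity)) _
        _ ≤ C0 * (2 + 9 * P) ^ (ℓ + 1) * Δ := by
            rw [pow_succ]
            have h6 : 6 * P * Xc * Δ ≤ C0 * (2 + 9 * P) ^ ℓ * Δ := by
              apply mul_le_mul_of_nonneg_right _ hΔ
              nlinarith
            nlinarith [mul_nonneg (mul_nonneg (le_of_lt hC00)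
              (pow_nonneg (by positivity : (0:ℝ) ≤ 2 + 9 * P) ℓ)) hΔ]
  intro ℓ hℓ
  have hpow : (2 + 9 * P) ^ ℓ ≤ (2 + 9 * P) ^ L := pow_le_pow_right₀ ha1 hℓ
  calc l2norm (xvec φ α σv σw θ x ℓ - xvec φ α σv σw θ' x ℓ) ≤
        C0 * (2 + 9 * P) ^ ℓ * Δ := main ℓ hℓ
    _ ≤ C0 * (2 + 9 * P) ^ L * Δ :=
        mul_le_mul_of_nonneg_right
          (mul_le_mul_of_nonneg_left hpow (le_of_lt hC00)) hΔ

lemma gvec_lip (L d : ℕ) (hL : 1 ≤ L) (hd : 1 ≤ d)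
    (α σv σw Cφ B : ℝ) (hα : 0 < α) (hσv : 0 < σv) (hσw : 0 < σw) (hCφ : 0 < Cφ)
    (hB : 0 ≤ B) :
    ∃ C : ℝ, 0 < C ∧
      ∀ (n : ℕ), 1 ≤ n → ∀ φ : ℝ → ℝ,
        (∀ z : ℝ, |φ z| ≤ Cφ * |z|) →
        (∀ z z' : ℝ, |φ z - φ z'| ≤ Cφ * |z - z'|) →
        ∀ x : Fin d → ℝ, l2norm x ≤ B →
        ∀ θ θ' : Params n L d, SpectralBounds θ → SpectralBounds θ' →
          ∀ ℓ : ℕ, 1 ≤ ℓ → ℓ ≤ L →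
            l2norm (gvec φ α σv σw θ x ℓ - gvec φ α σv σw θ' x ℓ) ≤
              C * paramNorm (θ - θ') := by
  obtain ⟨C1, hC1, hx1⟩ := xvec_lip L d hL hd α σv σw Cφ B hα hσv hσw hCφ hB
  set P := α * σv * σw * Cφ with hPdef
  have hP : 0 < P := by positivity
  set Xc := 3 * B * (1 + 9 * P) ^ L with hXcdef
  have hXc0 : 0 ≤ Xc := by positivity
  refine ⟨σw * (Xc + 3 * C1) + 1, by positivity, ?_⟩
  intro n hn φ hφ1 hφL x hx θ θ' hθ hθ' ℓ h1 h2
  have hs : (1:ℝ) ≤ Real.sqrt n := sqrt_one_le hn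
  have hs0 : (0:ℝ) < Real.sqrt n := lt_of_lt_of_le one_pos hs
  set Δ := paramNorm (θ - θ') with hΔdef
  have hΔ : 0 ≤ Δ := paramNorm_nonneg _
  have hxn : l2norm (xvec φ α σv σw θ x (ℓ - 1)) ≤ Xc * Real.sqrt n := by
    have h := xvec_norm_le φ α σv σw Cφ B hα hσv hσw hCφ hB hn hd hφ1 x hx θ hθ
      (ℓ - 1) (by omega)
    have hpow : (1 + 9 * P) ^ (ℓ - 1) ≤ (1 + 9 * P) ^ L :=
      pow_le_pow_right₀ (by nlinarith) (by omega)
    calc l2norm (xvec φ α σv σw θ x (ℓ - 1)) ≤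
          3 * B * (1 + 9 * P) ^ (ℓ - 1) * Real.sqrt n := h
      _ ≤ Xc * Real.sqrt n := by
          rw [hXcdef]
          exact mul_le_mul_of_nonneg_right
            (mul_le_mul_of_nonneg_left hpow (by positivity)) (le_of_lt hs0)
  have hdx : l2norm (xvec φ α σv σw θ x (ℓ - 1) - xvec φ α σv σw θ' x (ℓ - 1)) ≤
      C1 * Δ := hx1 n hn φ hφ1 hφL x hx θ θ' hθ hθ' (ℓ - 1) (by omega)
  obtain ⟨hW', _⟩ := hθ'.2.2 ℓ h1 h2
  have hsplit : gvec φ α σv σw θ x ℓ - gvec φ α σv σw θ' x ℓ =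
      (σw / Real.sqrt n) • ((Wmat (θ - θ') ℓ).mulVec (xvec φ α σv σw θ x (ℓ - 1)) +
        (Wmat θ' ℓ).mulVec (xvec φ α σv σw θ x (ℓ - 1) - xvec φ α σv σw θ' x (ℓ - 1))) := by
    rw [gvec, gvec, ← smul_sub]
    congr 1
    rw [← Wmat_sub, Matrix.sub_mulVec, Matrix.mulVec_sub]
    abel
  rw [hsplit, l2norm_smul, abs_of_pos (by positivity)]
  have hA : l2norm ((Wmat (θ - θ') ℓ).mulVec (xvec φ α σv σw θ x (ℓ - 1))) ≤
      Δ * (Xc * Real.sqrt n) :=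
    calc l2norm ((Wmat (θ - θ') ℓ).mulVec (xvec φ α σv σw θ x (ℓ - 1))) ≤
          frobNorm (Wmat (θ - θ') ℓ) * l2norm (xvec φ α σv σw θ x (ℓ - 1)) :=
          l2norm_mulVec_le_frob _ _
      _ ≤ Δ * (Xc * Real.sqrt n) :=
          mul_le_mul (frob_Wmat_le _ _ h1 h2) hxn (l2norm_nonneg _) hΔ
  have hB2 : l2norm ((Wmat θ' ℓ).mulVec
      (xvec φ α σv σw θ x (ℓ - 1) - xvec φ α σv σw θ' x (ℓ - 1))) ≤
      3 * Real.sqrt n * (C1 * Δ) :=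
    calc l2norm ((Wmat θ' ℓ).mulVec
          (xvec φ α σv σw θ x (ℓ - 1) - xvec φ α σv σw θ' x (ℓ - 1))) ≤
          specNorm (Wmat θ' ℓ) *
            l2norm (xvec φ α σv σw θ x (ℓ - 1) - xvec φ α σv σw θ' x (ℓ - 1)) :=
          l2norm_mulVec_le_spec _ _
      _ ≤ 3 * Real.sqrt n * (C1 * Δ) :=
          mul_le_mul hW' hdx (l2norm_nonneg _) (by positivity)
  have hsum : l2norm ((Wmat (θ - θ') ℓ).mulVec (xvec φ α σv σw θ x (ℓ - 1)) +
      (Wmat θ' ℓ).mulVec (xvec φ α σv σw θ x (ℓ - 1) - xvec φ α σv σw θ' x (ℓ - 1))) ≤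
      Δ * (Xc * Real.sqrt n) + 3 * Real.sqrt n * (C1 * Δ) :=
    le_trans (l2norm_add_le _ _) (add_le_add hA hB2)
  calc (σw / Real.sqrt n) * l2norm ((Wmat (θ - θ') ℓ).mulVec (xvec φ α σv σw θ x (ℓ - 1)) +
        (Wmat θ' ℓ).mulVec (xvec φ α σv σw θ x (ℓ - 1) - xvec φ α σv σw θ' x (ℓ - 1))) ≤
        (σw / Real.sqrt n) * (Δ * (Xc * Real.sqrt n) + 3 * Real.sqrt n * (C1 * Δ)) :=
        mul_le_mul_of_nonneg_left hsum (by positivity)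
    _ = σw * (Xc + 3 * C1) * Δ := by
        field_simp
    _ ≤ (σw * (Xc + 3 * C1) + 1) * Δ := by nlinarith

set_option maxHeartbeats 1600000 in
lemma deltaAux_lip (L d : ℕ) (hL : 1 ≤ L) (hd : 1 ≤ d)
    (α σv σw Cφ B : ℝ) (hα : 0 < α) (hσv : 0 < σv) (hσw : 0 < σw) (hCφ : 0 < Cφ)
    (hB : 0 ≤ B) :
    ∃ C : ℝ, 0 < C ∧
      ∀ (n : ℕ), 1 ≤ n → ∀ φ : ℝ → ℝ,
        (∀ z : ℝ, |φ z| ≤ Cφ * |z|) →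
        (∀ z : ℝ, |deriv φ z| ≤ Cφ) →
        (∀ z z' : ℝ, |φ z - φ z'| ≤ Cφ * |z - z'|) →
        (∀ z z' : ℝ, |deriv φ z - deriv φ z'| ≤ Cφ * |z - z'|) →
        ∀ x : Fin d → ℝ, l2norm x ≤ B →
        ∀ θ θ' : Params n L d, SpectralBounds θ → SpectralBounds θ' →
          ∀ k : ℕ, k ≤ L →
            l2norm (deltaAux φ α σv σw θ x k - deltaAux φ α σv σw θ' x k) ≤
              C * paramNorm (θ - θ') := by
  obtain ⟨Cg, hCg, hg⟩ := gvec_lip L d hL hd α σv σw Cφ B hα hσv hσw hCφ hB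
  set P := α * σv * σw * Cφ with hPdef
  have hP : 0 < P := by positivity
  set Dc := 2 * σw * (1 + 9 * P) ^ L with hDcdef
  have hDc0 : 0 < Dc := by positivity
  set Cstep := α * σw * σv * Cφ * Dc * (6 + 9 * Cg) with hCstepdef
  have hCstep : 0 < Cstep := by positivity
  set C0 := σw + Cstep + 1 with hC0def
  have hC00 : 0 < C0 := by positivity
  have ha1 : (1:ℝ) ≤ 2 + 9 * P := by nlinarith
  refine ⟨C0 * (2 + 9 * P) ^ L, by positivity, ?_⟩
  intro n hn φ hφ1 hφ' hφL hφ'L x hx θ θ' hθ hθ'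
  have hs : (1:ℝ) ≤ Real.sqrt n := sqrt_one_le hn
  have hs0 : (0:ℝ) < Real.sqrt n := lt_of_lt_of_le one_pos hs
  have hnn : Real.sqrt n * Real.sqrt n = (n:ℝ) := Real.mul_self_sqrt (by positivity)
  have hn0 : (0:ℝ) < (n:ℝ) := by exact_mod_cast hn
  have hsn : Real.sqrt n ≤ (n:ℝ) := by nlinarith
  set Δ := paramNorm (θ - θ') with hΔdef
  have hΔ : 0 ≤ Δ := paramNorm_nonneg _
  have main : ∀ k, k ≤ L →
      l2norm (deltaAux φ α σv σw θ x k - deltaAux φ α σv σw θ' x k) ≤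
        C0 * (2 + 9 * P) ^ k * Δ := by
    intro k
    induction k with
    | zero =>
      intro _
      have heq : deltaAux φ α σv σw θ x 0 - deltaAux φ α σv σw θ' x 0 =
          (σw / Real.sqrt n) • wOut (θ - θ') := by
        show (σw / Real.sqrt n) • wOut θ - (σw / Real.sqrt n) • wOut θ' = _
        rw [← smul_sub, wOut_sub]
      rw [heq, l2norm_smul, abs_of_pos (by positivity), pow_zero, mul_one]
      have h1 : σw / Real.sqrt n ≤ σw := by
        rw [div_le_iff₀ hs0]
        nlinarith
      calc (σw / Real.sqrt n) * l2norm (wOut (θ - θ')) ≤ σw * Δ :=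
            mul_le_mul h1 (l2norm_wOut_le _) (l2norm_nonneg _) (le_of_lt hσw)
        _ ≤ C0 * Δ := by
            apply mul_le_mul_of_nonneg_right _ hΔ
            rw [hC0def]
            nlinarith
    | succ k ih =>
      intro hk
      have hkL : k ≤ L := Nat.le_of_succ_le hk
      have ihk := ih hkL
      have hm1 : 1 ≤ L - k := by omega
      have hm2 : L - k ≤ L := by omega
      obtain ⟨hW, hV⟩ := hθ.2.2 (L - k) hm1 hm2
      obtain ⟨hW', hV'⟩ := hθ'.2.2 (L - k) hm1 hm2
      set δ := deltaAux φ α σv σw θ x k with hδdef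
      set δ' := deltaAux φ α σv σw θ' x k with hδ'def
      set D : Matrix (Fin n) (Fin n) ℝ :=
        Matrix.diagonal (fun i => deriv φ (gvec φ α σv σw θ x (L - k) i)) with hDdef
      set D' : Matrix (Fin n) (Fin n) ℝ :=
        Matrix.diagonal (fun i => deriv φ (gvec φ α σv σw θ' x (L - k) i)) with hD'def
      have hδn : l2norm δ ≤ Dc := by
        have h := deltaAux_norm_le φ α σv σw Cφ B hα hσv hσw hCφ hB hn hd hφ' x θ hθ k hkL
        have hpow : (1 + 9 * P) ^ k ≤ (1 + 9 * P) ^ L :=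
          pow_le_pow_right₀ (by nlinarith) hkL
        calc l2norm δ ≤ 2 * σw * (1 + 9 * P) ^ k := h
          _ ≤ Dc := by
              rw [hDcdef]
              exact mul_le_mul_of_nonneg_left hpow (by positivity)
      have hgd : l2norm (gvec φ α σv σw θ x (L - k) - gvec φ α σv σw θ' x (L - k)) ≤
          Cg * Δ := hg n hn φ hφ1 hφL x hx θ θ' hθ hθ' (L - k) hm1 hm2
      have hdd : l2norm (δ - δ') ≤ C0 * (2 + 9 * P) ^ k * Δ := ihk
      -- the four terms
      set u : Fin n → ℝ := (Vmat θ (L - k))ᵀ.mulVec δ with hudef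
      set T1 : Fin n → ℝ := (Wmat (θ - θ') (L - k))ᵀ.mulVec (D.mulVec u) with hT1def
      set T2 : Fin n → ℝ := (Wmat θ' (L - k))ᵀ.mulVec (D.mulVec u - D'.mulVec u) with hT2def
      set T3 : Fin n → ℝ :=
        (Wmat θ' (L - k))ᵀ.mulVec (D'.mulVec ((Vmat (θ - θ') (L - k))ᵀ.mulVec δ)) with hT3def
      set T4 : Fin n → ℝ :=
        (Wmat θ' (L - k))ᵀ.mulVec (D'.mulVec ((Vmat θ' (L - k))ᵀ.mulVec (δ - δ'))) with hT4def
      have heq : deltaAux φ α σv σw θ x (k + 1) - deltaAux φ α σv σw θ' x (k + 1) =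
          (δ - δ') + (α * σw * σv / (n : ℝ)) • (T1 + T2 + T3 + T4) := by
        show (δ + (α * σw * σv / (n : ℝ)) •
            ((Wmat θ (L - k))ᵀ * D * (Vmat θ (L - k))ᵀ).mulVec δ) -
          (δ' + (α * σw * σv / (n : ℝ)) •
            ((Wmat θ' (L - k))ᵀ * D' * (Vmat θ' (L - k))ᵀ).mulVec δ') = _
        have hM : ((Wmat θ (L - k))ᵀ * D * (Vmat θ (L - k))ᵀ).mulVec δ =
            (Wmat θ (L - k))ᵀ.mulVec (D.mulVec ((Vmat θ (L - k))ᵀ.mulVec δ)) := by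
          rw [Matrix.mulVec_mulVec, Matrix.mulVec_mulVec, mul_assoc]
        have hM' : ((Wmat θ' (L - k))ᵀ * D' * (Vmat θ' (L - k))ᵀ).mulVec δ' =
            (Wmat θ' (L - k))ᵀ.mulVec (D'.mulVec ((Vmat θ' (L - k))ᵀ.mulVec δ')) := by
          rw [Matrix.mulVec_mulVec, Matrix.mulVec_mulVec, mul_assoc]
        have hvec : (Wmat θ (L - k))ᵀ.mulVec (D.mulVec ((Vmat θ (L - k))ᵀ.mulVec δ)) -
            (Wmat θ' (L - k))ᵀ.mulVec (D'.mulVec ((Vmat θ' (L - k))ᵀ.mulVec δ')) =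
            T1 + T2 + T3 + T4 := by
          rw [hT1def, hT2def, hT3def, hT4def, ← Wmat_sub, ← Vmat_sub, hudef]
          simp only [Matrix.transpose_sub, Matrix.sub_mulVec, Matrix.mulVec_sub]
          abel
        rw [hM, hM', ← hvec, smul_sub]
        abel
      -- bounds on the four terms
      have hWm' : ∀ w : Fin n → ℝ, l2norm ((Wmat θ' (L - k))ᵀ.mulVec w) ≤
          3 * Real.sqrt n * l2norm w := fun w =>
        le_trans (l2norm_transpose_mulVec_le_spec _ _)
          (mul_le_mul_of_nonneg_right hW' (l2norm_nonneg _))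
      have hDm : ∀ w : Fin n → ℝ, l2norm (D.mulVec w) ≤ Cφ * l2norm w := by
        intro w
        rw [hDdef, l2norm_diagonal_mulVec]
        apply l2norm_le_pointwise (le_of_lt hCφ)
        intro i
        rw [abs_mul]
        exact mul_le_mul_of_nonneg_right (hφ' _) (abs_nonneg _)
      have hD'm : ∀ w : Fin n → ℝ, l2norm (D'.mulVec w) ≤ Cφ * l2norm w := by
        intro w
        rw [hD'def, l2norm_diagonal_mulVec]
        apply l2norm_le_pointwise (le_of_lt hCφ)
        intro i
        rw [abs_mul]
        exact mul_le_mul_of_nonneg_right (hφ' _) (abs_nonneg _)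
      have hu : l2norm u ≤ 3 * Real.sqrt n * Dc := by
        rw [hudef]
        calc l2norm ((Vmat θ (L - k))ᵀ.mulVec δ) ≤ specNorm (Vmat θ (L - k)) * l2norm δ :=
              l2norm_transpose_mulVec_le_spec _ _
          _ ≤ 3 * Real.sqrt n * Dc :=
              mul_le_mul hV hδn (l2norm_nonneg _) (by positivity)
      set dd := l2norm (δ - δ') with hdddef
      have hdd0 : 0 ≤ dd := l2norm_nonneg _
      have hT1 : l2norm T1 ≤ 3 * Cφ * Dc * Δ * n := by
        have h1 : l2norm (D.mulVec u) ≤ Cφ * (3 * Real.sqrt n * Dc) :=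
          le_trans (hDm u) (mul_le_mul_of_nonneg_left hu (le_of_lt hCφ))
        calc l2norm T1 ≤ frobNorm (Wmat (θ - θ') (L - k)) * l2norm (D.mulVec u) :=
              l2norm_transpose_mulVec_le_frob _ _
          _ ≤ Δ * (Cφ * (3 * Real.sqrt n * Dc)) :=
              mul_le_mul (frob_Wmat_le _ _ hm1 hm2) h1 (l2norm_nonneg _) hΔ
          _ = 3 * Cφ * Dc * Δ * Real.sqrt n := by ring
          _ ≤ 3 * Cφ * Dc * Δ * n :=
              mul_le_mul_of_nonneg_left hsn (by positivity)
      have hT2 : l2norm T2 ≤ 9 * Cφ * Cg * Dc * Δ * n := by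
        have hdiff : D.mulVec u - D'.mulVec u = fun i =>
            (deriv φ (gvec φ α σv σw θ x (L - k) i) -
              deriv φ (gvec φ α σv σw θ' x (L - k) i)) * u i := by
          funext i
          simp only [hDdef, hD'def, Pi.sub_apply, Matrix.mulVec_diagonal]
          ring
        have he : l2norm (fun i => deriv φ (gvec φ α σv σw θ x (L - k) i) -
            deriv φ (gvec φ α σv σw θ' x (L - k) i)) ≤
            Cφ * l2norm (gvec φ α σv σw θ x (L - k) - gvec φ α σv σw θ' x (L - k)) := by
          apply l2norm_le_pointwise (le_of_lt hCφ)
          intro i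
          exact hφ'L _ _
        have h2 : l2norm (D.mulVec u - D'.mulVec u) ≤ Cφ * (Cg * Δ) * (3 * Real.sqrt n * Dc) := by
          rw [hdiff]
          calc l2norm (fun i => (deriv φ (gvec φ α σv σw θ x (L - k) i) -
                deriv φ (gvec φ α σv σw θ' x (L - k) i)) * u i) ≤
                l2norm (fun i => deriv φ (gvec φ α σv σw θ x (L - k) i) -
                  deriv φ (gvec φ α σv σw θ' x (L - k) i)) * l2norm u :=
                l2norm_hadamard_le _ _
            _ ≤ Cφ * (Cg * Δ) * (3 * Real.sqrt n * Dc) := by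
                apply mul_le_mul _ hu (l2norm_nonneg _) (by positivity)
                calc _ ≤ Cφ * l2norm (gvec φ α σv σw θ x (L - k) -
                      gvec φ α σv σw θ' x (L - k)) := he
                  _ ≤ Cφ * (Cg * Δ) := mul_le_mul_of_nonneg_left hgd (le_of_lt hCφ)
        calc l2norm T2 ≤ 3 * Real.sqrt n * l2norm (D.mulVec u - D'.mulVec u) := hWm' _
          _ ≤ 3 * Real.sqrt n * (Cφ * (Cg * Δ) * (3 * Real.sqrt n * Dc)) :=
              mul_le_mul_of_nonneg_left h2 (by positivity)
          _ = 9 * Cφ * Cg * Dc * Δ * (Real.sqrt n * Real.sqrt n) := by ring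
          _ = 9 * Cφ * Cg * Dc * Δ * n := by rw [hnn]
      have hT3 : l2norm T3 ≤ 3 * Cφ * Dc * Δ * n := by
        have h1 : l2norm ((Vmat (θ - θ') (L - k))ᵀ.mulVec δ) ≤ Δ * Dc :=
          le_trans (l2norm_transpose_mulVec_le_frob _ _)
            (mul_le_mul (frob_Vmat_le _ _ hm1 hm2) hδn (l2norm_nonneg _) hΔ)
        have h2 : l2norm (D'.mulVec ((Vmat (θ - θ') (L - k))ᵀ.mulVec δ)) ≤ Cφ * (Δ * Dc) :=
          le_trans (hD'm _) (mul_le_mul_of_nonneg_left h1 (le_of_lt hCφ))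
        calc l2norm T3 ≤ 3 * Real.sqrt n *
              l2norm (D'.mulVec ((Vmat (θ - θ') (L - k))ᵀ.mulVec δ)) := hWm' _
          _ ≤ 3 * Real.sqrt n * (Cφ * (Δ * Dc)) :=
              mul_le_mul_of_nonneg_left h2 (by positivity)
          _ = 3 * Cφ * Dc * Δ * Real.sqrt n := by ring
          _ ≤ 3 * Cφ * Dc * Δ * n :=
              mul_le_mul_of_nonneg_left hsn (by positivity)
      have hT4 : l2norm T4 ≤ 9 * Cφ * dd * n := by
        have h1 : l2norm ((Vmat θ' (L - k))ᵀ.mulVec (δ - δ')) ≤ 3 * Real.sqrt n * dd :=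
          le_trans (l2norm_transpose_mulVec_le_spec _ _)
            (mul_le_mul_of_nonneg_right hV' hdd0)
        have h2 : l2norm (D'.mulVec ((Vmat θ' (L - k))ᵀ.mulVec (δ - δ'))) ≤
            Cφ * (3 * Real.sqrt n * dd) :=
          le_trans (hD'm _) (mul_le_mul_of_nonneg_left h1 (le_of_lt hCφ))
        calc l2norm T4 ≤ 3 * Real.sqrt n *
              l2norm (D'.mulVec ((Vmat θ' (L - k))ᵀ.mulVec (δ - δ'))) := hWm' _
          _ ≤ 3 * Real.sqrt n * (Cφ * (3 * Real.sqrt n * dd)) :=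
              mul_le_mul_of_nonneg_left h2 (by positivity)
          _ = 9 * Cφ * dd * (Real.sqrt n * Real.sqrt n) := by ring
          _ = 9 * Cφ * dd * n := by rw [hnn]
      have hsum4 : l2norm (T1 + T2 + T3 + T4) ≤
          3 * Cφ * Dc * Δ * n + 9 * Cφ * Cg * Dc * Δ * n + 3 * Cφ * Dc * Δ * n +
            9 * Cφ * dd * n := by
        calc l2norm (T1 + T2 + T3 + T4) ≤ l2norm (T1 + T2 + T3) + l2norm T4 :=
              l2norm_add_le _ _
          _ ≤ (l2norm (T1 + T2) + l2norm T3) + l2norm T4 :=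
              add_le_add_left (l2norm_add_le _ _) _
          _ ≤ ((l2norm T1 + l2norm T2) + l2norm T3) + l2norm T4 :=
              add_le_add_left (add_le_add_left (l2norm_add_le _ _) _) _
          _ ≤ _ := by
              have := hT1; have := hT2; have := hT3; have := hT4
              linarith
      have hterm : l2norm ((α * σw * σv / (n : ℝ)) • (T1 + T2 + T3 + T4)) ≤
          Cstep * Δ + 9 * P * dd := by
        rw [l2norm_smul, abs_of_pos (by positivity)]
        calc (α * σw * σv / (n : ℝ)) * l2norm (T1 + T2 + T3 + T4) ≤
              (α * σw * σv / (n : ℝ)) *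
                (3 * Cφ * Dc * Δ * n + 9 * Cφ * Cg * Dc * Δ * n + 3 * Cφ * Dc * Δ * n +
                  9 * Cφ * dd * n) :=
              mul_le_mul_of_nonneg_left hsum4 (by positivity)
          _ = Cstep * Δ + 9 * P * dd := by
              rw [hCstepdef, hPdef]
              field_simp
              ring
      have hfin : l2norm (deltaAux φ α σv σw θ x (k + 1) - deltaAux φ α σv σw θ' x (k + 1)) ≤
          (1 + 9 * P) * dd + Cstep * Δ := by
        rw [heq]
        calc l2norm ((δ - δ') + (α * σw * σv / (n : ℝ)) • (T1 + T2 + T3 + T4)) ≤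
              dd + l2norm ((α * σw * σv / (n : ℝ)) • (T1 + T2 + T3 + T4)) :=
              l2norm_add_le _ _
          _ ≤ dd + (Cstep * Δ + 9 * P * dd) := add_le_add_right hterm _
          _ = (1 + 9 * P) * dd + Cstep * Δ := by ring
      have hA1 : (1:ℝ) ≤ (2 + 9 * P) ^ k := one_le_pow₀ ha1
      have hCs : Cstep ≤ C0 := by rw [hC0def]; nlinarith
      calc l2norm (deltaAux φ α σv σw θ x (k + 1) - deltaAux φ α σv σw θ' x (k + 1)) ≤
            (1 + 9 * P) * dd + Cstep * Δ := hfin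
        _ ≤ (1 + 9 * P) * (C0 * (2 + 9 * P) ^ k * Δ) + Cstep * Δ :=
            add_le_add_left (mul_le_mul_of_nonneg_left hdd (by positivity)) _
        _ ≤ C0 * (2 + 9 * P) ^ (k + 1) * Δ := by
            rw [pow_succ]
            have h6 : Cstep * Δ ≤ C0 * (2 + 9 * P) ^ k * Δ := by
              apply mul_le_mul_of_nonneg_right _ hΔ
              nlinarith
            nlinarith [mul_nonneg (mul_nonneg (le_of_lt hC00)
              (pow_nonneg (by positivity : (0:ℝ) ≤ 2 + 9 * P) k)) hΔ]
  intro k hk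
  have hpow : (2 + 9 * P) ^ k ≤ (2 + 9 * P) ^ L := pow_le_pow_right₀ ha1 hk
  calc l2norm (deltaAux φ α σv σw θ x k - deltaAux φ α σv σw θ' x k) ≤
        C0 * (2 + 9 * P) ^ k * Δ := main k hk
    _ ≤ C0 * (2 + 9 * P) ^ L * Δ :=
        mul_le_mul_of_nonneg_right
          (mul_le_mul_of_nonneg_left hpow (le_of_lt hC00)) hΔ

end RNaux

open RNaux Matrix

set_option maxHeartbeats 1600000

/-- **Auxiliary parameter-Lipschitz bounds for γ and z.** There is a constant K depending
only on L, α, σ_v, σ_w, C_φ, B and d (not on n) such that for all θ, θ̃ satisfying the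
spectral bounds and every ℓ ∈ {1,…,L}:
‖γ^{(ℓ)}(θ) − γ^{(ℓ)}(θ̃)‖₂ ≤ K‖θ − θ̃‖₂ and ‖z^{(ℓ)}(θ) − z^{(ℓ)}(θ̃)‖₂ ≤ K‖θ − θ̃‖₂. -/
theorem gamma_z_parameter_lipschitz
    (L d : ℕ) (hL : 1 ≤ L) (hd : 1 ≤ d)
    (α σv σw Cφ B : ℝ) (hα : 0 < α) (hσv : 0 < σv) (hσw : 0 < σw) (hCφ : 0 < Cφ)
    (hB : 0 ≤ B) :
    ∃ K : ℝ, 0 < K ∧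
      ∀ (n : ℕ) (φ : ℝ → ℝ), Differentiable ℝ φ →
        (∀ z : ℝ, |φ z| ≤ Cφ * |z|) → (∀ z : ℝ, |deriv φ z| ≤ Cφ) →
        (∀ z z' : ℝ, |φ z - φ z'| ≤ Cφ * |z - z'|) →
        (∀ z z' : ℝ, |deriv φ z - deriv φ z'| ≤ Cφ * |z - z'|) →
        ∀ x : Fin d → ℝ, l2norm x ≤ B →
        ∀ θ θ' : Params n L d, SpectralBounds θ → SpectralBounds θ' →
          ∀ ℓ : ℕ, 1 ≤ ℓ → ℓ ≤ L →
            l2norm (gammaVec φ α σv σw θ x ℓ - gammaVec φ α σv σw θ' x ℓ) ≤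
                K * paramNorm (θ - θ') ∧
            l2norm (zVec φ α σv σw θ x ℓ - zVec φ α σv σw θ' x ℓ) ≤
                K * paramNorm (θ - θ') := by
  obtain ⟨Cg, hCg, hg⟩ := gvec_lip L d hL hd α σv σw Cφ B hα hσv hσw hCφ hB
  obtain ⟨Cδ, hCδ, hδlip⟩ := deltaAux_lip L d hL hd α σv σw Cφ B hα hσv hσw hCφ hB
  set P := α * σv * σw * Cφ with hPdef
  have hP : 0 < P := by positivity
  set Dc := 2 * σw * (1 + 9 * P) ^ L with hDcdef
  have hDc0 : 0 < Dc := by positivity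
  set K := α * σv * Cφ * Cg + α * σv * σw * Cφ * (3 * Cg * Dc + Dc + 3 * Cδ) + 1 with hKdef
  refine ⟨K, by positivity, ?_⟩
  intro n φ hdiffφ hφ1 hφ' hφL hφ'L x hx θ θ' hθ hθ' ℓ h1 h2
  set Δ := paramNorm (θ - θ') with hΔdef
  have hΔ : 0 ≤ Δ := paramNorm_nonneg _
  rcases Nat.eq_zero_or_pos n with rfl | hn
  · constructor <;>
    · have hz : ∀ v : Fin 0 → ℝ, l2norm v = 0 := by
        intro v
        simp [l2norm]
      rw [hz]
      positivity
  · have hs : (1:ℝ) ≤ Real.sqrt n := sqrt_one_le hn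
    have hs0 : (0:ℝ) < Real.sqrt n := lt_of_lt_of_le one_pos hs
    have hgd : l2norm (gvec φ α σv σw θ x ℓ - gvec φ α σv σw θ' x ℓ) ≤ Cg * Δ :=
      hg n hn φ hφ1 hφL x hx θ θ' hθ hθ' ℓ h1 h2
    constructor
    · -- gamma bound
      obtain ⟨hW, hV⟩ := hθ.2.2 ℓ h1 h2
      obtain ⟨hW', hV'⟩ := hθ'.2.2 ℓ h1 h2
      set δ := deltaVec φ α σv σw θ x ℓ with hδdef
      set δ' := deltaVec φ α σv σw θ' x ℓ with hδ'def
      set D : Matrix (Fin n) (Fin n) ℝ :=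
        Matrix.diagonal (fun i => deriv φ (gvec φ α σv σw θ x ℓ i)) with hDdef
      set D' : Matrix (Fin n) (Fin n) ℝ :=
        Matrix.diagonal (fun i => deriv φ (gvec φ α σv σw θ' x ℓ i)) with hD'def
      have hδn : l2norm δ ≤ Dc := by
        have h := deltaAux_norm_le φ α σv σw Cφ B hα hσv hσw hCφ hB hn hd hφ' x θ hθ
          (L - ℓ) (by omega)
        have hpow : (1 + 9 * P) ^ (L - ℓ) ≤ (1 + 9 * P) ^ L :=
          pow_le_pow_right₀ (by nlinarith) (by omega)
        calc l2norm δ ≤ 2 * σw * (1 + 9 * P) ^ (L - ℓ) := h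
          _ ≤ Dc := by
              rw [hDcdef]
              exact mul_le_mul_of_nonneg_left hpow (by positivity)
      have hdd : l2norm (δ - δ') ≤ Cδ * Δ :=
        hδlip n hn φ hφ1 hφ' hφL hφ'L x hx θ θ' hθ hθ' (L - ℓ) (by omega)
      have hdd0 : 0 ≤ l2norm (δ - δ') := l2norm_nonneg _
      set u : Fin n → ℝ := (Vmat θ ℓ)ᵀ.mulVec δ with hudef
      set S1 : Fin n → ℝ := D.mulVec u - D'.mulVec u with hS1def
      set S2 : Fin n → ℝ := D'.mulVec ((Vmat (θ - θ') ℓ)ᵀ.mulVec δ) with hS2def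
      set S3 : Fin n → ℝ := D'.mulVec ((Vmat θ' ℓ)ᵀ.mulVec (δ - δ')) with hS3def
      have heq : gammaVec φ α σv σw θ x ℓ - gammaVec φ α σv σw θ' x ℓ =
          (α * σv * σw / Real.sqrt n) • (S1 + S2 + S3) := by
        show (α * σv * σw / Real.sqrt n) • (D * (Vmat θ ℓ)ᵀ).mulVec δ -
            (α * σv * σw / Real.sqrt n) • (D' * (Vmat θ' ℓ)ᵀ).mulVec δ' = _
        have hM : (D * (Vmat θ ℓ)ᵀ).mulVec δ = D.mulVec ((Vmat θ ℓ)ᵀ.mulVec δ) := by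
          rw [Matrix.mulVec_mulVec]
        have hM' : (D' * (Vmat θ' ℓ)ᵀ).mulVec δ' = D'.mulVec ((Vmat θ' ℓ)ᵀ.mulVec δ') := by
          rw [Matrix.mulVec_mulVec]
        have hvec : D.mulVec ((Vmat θ ℓ)ᵀ.mulVec δ) - D'.mulVec ((Vmat θ' ℓ)ᵀ.mulVec δ') =
            S1 + S2 + S3 := by
          rw [hS1def, hS2def, hS3def, ← Vmat_sub, hudef]
          simp only [Matrix.transpose_sub, Matrix.sub_mulVec, Matrix.mulVec_sub]
          abel
        rw [hM, hM', ← hvec, smul_sub]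
      have hD'm : ∀ w : Fin n → ℝ, l2norm (D'.mulVec w) ≤ Cφ * l2norm w := by
        intro w
        rw [hD'def, l2norm_diagonal_mulVec]
        apply l2norm_le_pointwise (le_of_lt hCφ)
        intro i
        rw [abs_mul]
        exact mul_le_mul_of_nonneg_right (hφ' _) (abs_nonneg _)
      have hu : l2norm u ≤ 3 * Real.sqrt n * Dc := by
        rw [hudef]
        calc l2norm ((Vmat θ ℓ)ᵀ.mulVec δ) ≤ specNorm (Vmat θ ℓ) * l2norm δ :=
              l2norm_transpose_mulVec_le_spec _ _
          _ ≤ 3 * Real.sqrt n * Dc :=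
              mul_le_mul hV hδn (l2norm_nonneg _) (by positivity)
      have hS1 : l2norm S1 ≤ 3 * Cφ * Cg * Dc * Δ * Real.sqrt n := by
        have hdiff : D.mulVec u - D'.mulVec u = fun i =>
            (deriv φ (gvec φ α σv σw θ x ℓ i) - deriv φ (gvec φ α σv σw θ' x ℓ i)) * u i := by
          funext i
          simp only [hDdef, hD'def, Pi.sub_apply, Matrix.mulVec_diagonal]
          ring
        have he : l2norm (fun i => deriv φ (gvec φ α σv σw θ x ℓ i) -
            deriv φ (gvec φ α σv σw θ' x ℓ i)) ≤
            Cφ * l2norm (gvec φ α σv σw θ x ℓ - gvec φ α σv σw θ' x ℓ) := by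
          apply l2norm_le_pointwise (le_of_lt hCφ)
          intro i
          exact hφ'L _ _
        rw [hS1def, hdiff]
        calc l2norm (fun i => (deriv φ (gvec φ α σv σw θ x ℓ i) -
              deriv φ (gvec φ α σv σw θ' x ℓ i)) * u i) ≤
              l2norm (fun i => deriv φ (gvec φ α σv σw θ x ℓ i) -
                deriv φ (gvec φ α σv σw θ' x ℓ i)) * l2norm u := l2norm_hadamard_le _ _
          _ ≤ Cφ * (Cg * Δ) * (3 * Real.sqrt n * Dc) := by
              apply mul_le_mul _ hu (l2norm_nonneg _) (by positivity)
              calc _ ≤ Cφ * l2norm (gvec φ α σv σw θ x ℓ - gvec φ α σv σw θ' x ℓ) := he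
                _ ≤ Cφ * (Cg * Δ) := mul_le_mul_of_nonneg_left hgd (le_of_lt hCφ)
          _ = 3 * Cφ * Cg * Dc * Δ * Real.sqrt n := by ring
      have hS2 : l2norm S2 ≤ Cφ * Dc * Δ * Real.sqrt n := by
        have hi : l2norm ((Vmat (θ - θ') ℓ)ᵀ.mulVec δ) ≤ Δ * Dc :=
          le_trans (l2norm_transpose_mulVec_le_frob _ _)
            (mul_le_mul (frob_Vmat_le _ _ h1 h2) hδn (l2norm_nonneg _) hΔ)
        rw [hS2def]
        calc l2norm (D'.mulVec ((Vmat (θ - θ') ℓ)ᵀ.mulVec δ)) ≤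
              Cφ * l2norm ((Vmat (θ - θ') ℓ)ᵀ.mulVec δ) := hD'm _
          _ ≤ Cφ * (Δ * Dc) := mul_le_mul_of_nonneg_left hi (le_of_lt hCφ)
          _ = Cφ * Dc * Δ * 1 := by ring
          _ ≤ Cφ * Dc * Δ * Real.sqrt n :=
              mul_le_mul_of_nonneg_left hs (by positivity)
      have hS3 : l2norm S3 ≤ 3 * Cφ * Cδ * Δ * Real.sqrt n := by
        have hi : l2norm ((Vmat θ' ℓ)ᵀ.mulVec (δ - δ')) ≤ 3 * Real.sqrt n * (Cδ * Δ) :=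
          le_trans (l2norm_transpose_mulVec_le_spec _ _)
            (mul_le_mul hV' hdd hdd0 (by positivity))
        rw [hS3def]
        calc l2norm (D'.mulVec ((Vmat θ' ℓ)ᵀ.mulVec (δ - δ'))) ≤
              Cφ * l2norm ((Vmat θ' ℓ)ᵀ.mulVec (δ - δ')) := hD'm _
          _ ≤ Cφ * (3 * Real.sqrt n * (Cδ * Δ)) :=
              mul_le_mul_of_nonneg_left hi (le_of_lt hCφ)
          _ = 3 * Cφ * Cδ * Δ * Real.sqrt n := by ring
      have hsum : l2norm (S1 + S2 + S3) ≤
          (3 * Cφ * Cg * Dc * Δ + Cφ * Dc * Δ + 3 * Cφ * Cδ * Δ) * Real.sqrt n := by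
        calc l2norm (S1 + S2 + S3) ≤ l2norm (S1 + S2) + l2norm S3 := l2norm_add_le _ _
          _ ≤ (l2norm S1 + l2norm S2) + l2norm S3 :=
              add_le_add_left (l2norm_add_le _ _) _
          _ ≤ _ := by
              rw [add_mul, add_mul]
              exact add_le_add (add_le_add hS1 hS2) hS3
      rw [heq, l2norm_smul, abs_of_pos (by positivity)]
      calc (α * σv * σw / Real.sqrt n) * l2norm (S1 + S2 + S3) ≤
            (α * σv * σw / Real.sqrt n) *
              ((3 * Cφ * Cg * Dc * Δ + Cφ * Dc * Δ + 3 * Cφ * Cδ * Δ) * Real.sqrt n) :=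
            mul_le_mul_of_nonneg_left hsum (by positivity)
        _ = α * σv * σw * Cφ * (3 * Cg * Dc + Dc + 3 * Cδ) * Δ := by
            field_simp
        _ ≤ K * Δ := by
            apply mul_le_mul_of_nonneg_right _ hΔ
            rw [hKdef]
            nlinarith
    · -- z bound
      have hzb : l2norm (zVec φ α σv σw θ x ℓ - zVec φ α σv σw θ' x ℓ) ≤
          (α * σv * Cφ) * l2norm (gvec φ α σv σw θ x ℓ - gvec φ α σv σw θ' x ℓ) := by
        apply l2norm_le_pointwise (by positivity)
        intro i
        show |α * σv * φ (gvec φ α σv σw θ x ℓ i) -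
            α * σv * φ (gvec φ α σv σw θ' x ℓ i)| ≤ _
        rw [← mul_sub, abs_mul, abs_of_pos (by positivity : (0:ℝ) < α * σv), Pi.sub_apply]
        have h2 := mul_le_mul_of_nonneg_left
          (hφL (gvec φ α σv σw θ x ℓ i) (gvec φ α σv σw θ' x ℓ i))
          (by positivity : (0:ℝ) ≤ α * σv)
        nlinarith [h2]
      calc l2norm (zVec φ α σv σw θ x ℓ - zVec φ α σv σw θ' x ℓ) ≤
            (α * σv * Cφ) * l2norm (gvec φ α σv σw θ x ℓ - gvec φ α σv σw θ' x ℓ) := hzb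
        _ ≤ (α * σv * Cφ) * (Cg * Δ) := mul_le_mul_of_nonneg_left hgd (by positivity)
        _ ≤ K * Δ := by
            apply le_trans (le_of_eq (by ring : (α * σv * Cφ) * (Cg * Δ) =
              (α * σv * Cφ * Cg) * Δ))
            apply mul_le_mul_of_nonneg_right _ hΔ
            rw [hKdef]
            have h0 : (0:ℝ) ≤ α * σv * σw * Cφ * (3 * Cg * Dc + Dc + 3 * Cδ) := by
              positivity
            linarith

end
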